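/- arXiv:1204.5043 — 9 statements merged into one kernel-verified Lean document; each statement's English description precedes it below -/
import Mathlib

section
/- For every u ∈ ℝ^d and every integer k with 1 ≤ k ≤ d, the dual norm of the k-support norm satisfies: sup{⟨w, u⟩ : ‖w‖_k^sp ≤ 1} = max{ (∑_{i∈I} u_i²)^{1/2} : I ⊆ {1,…,d}, |I| = k } = (∑_{i=1}^k (|u|↓_i)²)^{1/2}, i.e. the dual norm equals the ℓ2 norm of the k largest-magnitude entries of u. -/
/-- The nonincreasing rearrangement of the absolute values of `u`,
0-indexed: `absDown u i` is the `(i+1)`-th largest of `|u 0|, …, |u (d-1)|`. -/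
noncomputable def absDown {d : ℕ} (u : Fin d → ℝ) (i : Fin d) : ℝ :=
  |u (Tuple.sort (fun j => |u j|) i.rev)|

/-- 1-indexed access to the nonincreasing rearrangement: `zD u i = |u|↓_i` for `1 ≤ i ≤ d`. -/
noncomputable def zD {d : ℕ} (u : Fin d → ℝ) (i : ℕ) : ℝ :=
  if h : 1 ≤ i ∧ i ≤ d then absDown u ⟨i - 1, by omega⟩ else 0

/-- The unit ball of the k-support norm: the convex hull of
`S_k = {w : ‖w‖₀ ≤ k, ‖w‖₂ ≤ 1}`. -/
noncomputable def kSupBall (d k : ℕ) : Set (EuclideanSpace ℝ (Fin d)) :=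
  convexHull ℝ {w | (Finset.univ.filter fun i => w i ≠ 0).card ≤ k ∧ ‖w‖ ≤ 1}

/-- The k-support norm, defined as the gauge of `kSupBall d k`. -/
noncomputable def kSupNorm (d k : ℕ) (w : EuclideanSpace ℝ (Fin d)) : ℝ :=
  gauge (kSupBall d k) w

/-- The elastic-net norm `max{‖w‖₂, ‖w‖₁ / √k}`. -/
noncomputable def elNet (d k : ℕ) (w : EuclideanSpace ℝ (Fin d)) : ℝ :=
  max ‖w‖ ((∑ i, |w i|) / Real.sqrt k)

section aux

lemma eucl_norm_eq {d : ℕ} (w : EuclideanSpace ℝ (Fin d)) :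
    ‖w‖ = Real.sqrt (∑ i, w i ^ 2) := by
  rw [EuclideanSpace.norm_eq]
  congr 1
  exact Finset.sum_congr rfl fun i _ => by rw [Real.norm_eq_abs, sq_abs]

lemma eucl_abs_le_norm {d : ℕ} (w : EuclideanSpace ℝ (Fin d)) (i : Fin d) : |w i| ≤ ‖w‖ := by
  rw [eucl_norm_eq, ← Real.sqrt_sq_eq_abs]
  exact Real.sqrt_le_sqrt (Finset.single_le_sum (f := fun j => w j ^ 2)
    (fun j _ => sq_nonneg _) (Finset.mem_univ i))

lemma sign_mul_abs' (a : ℝ) : Real.sign a * |a| = a := by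
  rcases lt_trichotomy a 0 with h|h|h
  · rw [Real.sign_of_neg h, abs_of_neg h]; ring
  · simp [h]
  · rw [Real.sign_of_pos h, abs_of_pos h]; ring

lemma abs_sign_le_one (a : ℝ) : |Real.sign a| ≤ 1 := by
  rcases Real.sign_apply_eq a with h|h|h <;> rw [h] <;> norm_num

lemma cs_sum {ι : Type*} (s : Finset ι) (f g : ι → ℝ) :
    ∑ i ∈ s, f i * g i ≤ Real.sqrt (∑ i ∈ s, f i ^ 2) * Real.sqrt (∑ i ∈ s, g i ^ 2) := by
  have h := Finset.sum_mul_sq_le_sq_mul_sq s f g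
  calc ∑ i ∈ s, f i * g i ≤ |∑ i ∈ s, f i * g i| := le_abs_self _
    _ = Real.sqrt ((∑ i ∈ s, f i * g i) ^ 2) := (Real.sqrt_sq_eq_abs _).symm
    _ ≤ Real.sqrt ((∑ i ∈ s, f i ^ 2) * ∑ i ∈ s, g i ^ 2) := Real.sqrt_le_sqrt h
    _ = _ := Real.sqrt_mul (Finset.sum_nonneg fun i _ => sq_nonneg _) _

lemma exchange {α : Type*} [DecidableEq α] (I T : Finset α) (g : α → ℝ)
    (hcard : I.card = T.card)
    (hsep : ∀ t ∈ T, ∀ s, s ∉ T → g s ≤ g t) :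
    ∑ i ∈ I, g i ≤ ∑ i ∈ T, g i := by
  have hc : (I \ T).card = (T \ I).card := by
    have h1 := Finset.card_sdiff_add_card_inter I T
    have h2 := Finset.card_sdiff_add_card_inter T I
    rw [Finset.inter_comm] at h2
    omega
  rw [← Finset.sum_inter_add_sum_sdiff I T g, ← Finset.sum_inter_add_sum_sdiff T I g,
    Finset.inter_comm T I]
  refine add_le_add le_rfl ?_
  rcases (T \ I).eq_empty_or_nonempty with he | hne
  · have h0 : (I \ T).card = 0 := by rw [hc, he]; simp
    rw [Finset.card_eq_zero.mp h0, he]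
  · obtain ⟨t₀, ht₀, hmin⟩ := Finset.exists_min_image (T \ I) g hne
    have ht₀T : t₀ ∈ T := (Finset.mem_sdiff.mp ht₀).1
    calc ∑ i ∈ I \ T, g i ≤ (I \ T).card • g t₀ :=
        Finset.sum_le_card_nsmul _ _ _ fun x hx => hsep t₀ ht₀T x (Finset.mem_sdiff.mp hx).2
      _ = (T \ I).card • g t₀ := by rw [hc]
      _ ≤ ∑ i ∈ T \ I, g i := Finset.card_nsmul_le_sum _ _ _ fun x hx => hmin x hx

lemma single_mem_base {d k : ℕ} (hk1 : 1 ≤ k) (i : Fin d) (a : ℝ) (ha : |a| ≤ 1) :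
    EuclideanSpace.single i a ∈
      {w : EuclideanSpace ℝ (Fin d) |
        (Finset.univ.filter fun j => w j ≠ 0).card ≤ k ∧ ‖w‖ ≤ 1} := by
  constructor
  · refine le_trans (le_trans (Finset.card_le_card (t := {i}) ?_) (by simp)) hk1
    intro j hj
    simp only [Finset.mem_filter, Finset.mem_univ, true_and] at hj
    simp only [Finset.mem_singleton]
    by_contra hji
    exact hj (by rw [EuclideanSpace.single_apply, if_neg hji])
  · rw [EuclideanSpace.norm_single, Real.norm_eq_abs]
    exact ha

lemma zero_mem_base {d k : ℕ} :
    (0 : EuclideanSpace ℝ (Fin d)) ∈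
      {w : EuclideanSpace ℝ (Fin d) |
        (Finset.univ.filter fun j => w j ≠ 0).card ≤ k ∧ ‖w‖ ≤ 1} := by
  constructor
  · simp
  · simp

lemma l1_mem_ball {d k : ℕ} (hk1 : 1 ≤ k) (w : EuclideanSpace ℝ (Fin d))
    (hw : ∑ i, |w i| ≤ 1) : w ∈ kSupBall d k := by
  by_cases h0 : w = 0
  · subst h0
    exact subset_convexHull ℝ _ zero_mem_base
  · set c := ∑ i, |w i| with hc
    have hex : ∃ i, w i ≠ 0 := by
      by_contra h
      push_neg at h
      exact h0 (by ext i; simp [h i])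
    obtain ⟨i₀, hi₀⟩ := hex
    have hcpos : 0 < c := by
      have h1 : |w i₀| ≤ c :=
        Finset.single_le_sum (f := fun j => |w j|) (fun j _ => abs_nonneg _) (Finset.mem_univ i₀)
      have h2 : 0 < |w i₀| := abs_pos.mpr hi₀
      linarith
    have hrepr : w = ∑ i, (|w i| / c) • EuclideanSpace.single i (c * Real.sign (w i)) := by
      ext j
      rw [WithLp.ofLp_sum, Finset.sum_apply]
      simp only [PiLp.smul_apply, EuclideanSpace.single_apply, smul_eq_mul,
        mul_ite, mul_zero]
      rw [Finset.sum_ite_eq Finset.univ j]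
      simp only [Finset.mem_univ, if_true]
      have : |w j| / c * (c * Real.sign (w j)) = (c / c) * (Real.sign (w j) * |w j|) := by ring
      rw [this, div_self hcpos.ne', one_mul, sign_mul_abs']
    rw [hrepr, kSupBall]
    apply Convex.sum_mem (convex_convexHull ℝ _)
    · intro i _
      exact div_nonneg (abs_nonneg _) hcpos.le
    · rw [← Finset.sum_div, div_self hcpos.ne']
    · intro i _
      apply subset_convexHull ℝ _
      apply single_mem_base hk1
      rw [abs_mul, abs_of_pos hcpos]
      calc c * |Real.sign (w i)| ≤ c * 1 :=
          mul_le_mul_of_nonneg_left (abs_sign_le_one _) hcpos.le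
        _ = c := mul_one c
        _ ≤ 1 := hw

lemma ball_mem_nhds {d k : ℕ} (hk1 : 1 ≤ k) (hkd : k ≤ d) :
    kSupBall d k ∈ nhds (0 : EuclideanSpace ℝ (Fin d)) := by
  have hd1 : (1 : ℝ) ≤ d := by exact_mod_cast hk1.trans hkd
  refine Filter.mem_of_superset (Metric.ball_mem_nhds _ (show (0:ℝ) < 1 / (d + 1) by positivity)) ?_
  intro w hw
  apply l1_mem_ball hk1
  have hwn : ‖w‖ < 1 / (d + 1) := by
    simpa [Metric.mem_ball, dist_zero_right] using hw
  have hsum : ∑ i, |w i| ≤ (d : ℝ) * ‖w‖ := by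
    calc ∑ i, |w i| ≤ ∑ _i : Fin d, ‖w‖ := Finset.sum_le_sum fun i _ => eucl_abs_le_norm w i
      _ = (d : ℝ) * ‖w‖ := by simp [Finset.sum_const, Finset.card_univ, nsmul_eq_mul]
  have h2 : (d : ℝ) * ‖w‖ ≤ (d : ℝ) * (1 / (d + 1)) :=
    mul_le_mul_of_nonneg_left hwn.le (by positivity)
  have h3 : (d : ℝ) * (1 / (d + 1)) ≤ 1 := by
    rw [mul_one_div, div_le_one (by positivity)]
    linarith
  linarith

end aux

set_option maxHeartbeats 1000000 in
/-- the dual norm of the k-support norm is the ℓ2 norm of the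
k largest-magnitude entries: `sup{⟨w,u⟩ : ‖w‖ₖˢᵖ ≤ 1} = max{(∑_{i∈I} uᵢ²)^½ : |I| = k}
= (∑_{i=1}^k (|u|↓ᵢ)²)^½`. -/
theorem statement0 (d k : ℕ) (hk1 : 1 ≤ k) (hkd : k ≤ d) (u : EuclideanSpace ℝ (Fin d)) :
    sSup {x : ℝ | ∃ w : EuclideanSpace ℝ (Fin d), kSupNorm d k w ≤ 1 ∧ x = ∑ i, w i * u i}
      = sSup {x : ℝ | ∃ I : Finset (Fin d), I.card = k ∧ x = Real.sqrt (∑ i ∈ I, u i ^ 2)} ∧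
    sSup {x : ℝ | ∃ I : Finset (Fin d), I.card = k ∧ x = Real.sqrt (∑ i ∈ I, u i ^ 2)}
      = Real.sqrt (∑ i ∈ Finset.Icc 1 k, zD u i ^ 2) := by
  set S := {x : ℝ | ∃ I : Finset (Fin d), I.card = k ∧ x = Real.sqrt (∑ i ∈ I, u i ^ 2)} with hSdef
  set L := {x : ℝ | ∃ w : EuclideanSpace ℝ (Fin d),
      kSupNorm d k w ≤ 1 ∧ x = ∑ i, w i * u i} with hLdef
  -- S is a finite nonempty set of reals
  have hSim : S = (fun I : Finset (Fin d) => Real.sqrt (∑ i ∈ I, u i ^ 2)) ''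
      {I : Finset (Fin d) | I.card = k} := by
    ext x
    simp only [hSdef, Set.mem_setOf_eq, Set.mem_image, eq_comm]
  have hSfin : S.Finite := hSim ▸ Set.Finite.image _ (Set.toFinite _)
  have hSne : S.Nonempty := by
    obtain ⟨I, -, hI⟩ := Finset.exists_subset_card_eq
      (show k ≤ (Finset.univ : Finset (Fin d)).card by simpa using hkd)
    exact ⟨_, I, hI, rfl⟩
  have hSbdd : BddAbove S := hSfin.bddAbove
  set D := sSup S with hDdef
  have hDmem : ∀ I : Finset (Fin d), I.card = k → Real.sqrt (∑ i ∈ I, u i ^ 2) ≤ D :=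
    fun I hI => le_csSup hSbdd ⟨I, hI, rfl⟩
  -- the ball is contained in the halfspace {v | ⟨v,u⟩ ≤ D}
  have hhalf : kSupBall d k ⊆ {v : EuclideanSpace ℝ (Fin d) | ∑ i, v i * u i ≤ D} := by
    rw [kSupBall]
    apply convexHull_min ?_ (convex_halfSpace_le
      ⟨fun a b => by
          simp only [PiLp.add_apply, add_mul]
          exact Finset.sum_add_distrib,
        fun c v => by
          simp only [PiLp.smul_apply, smul_eq_mul, Finset.mul_sum, mul_assoc]⟩ D)
    rintro v ⟨hvcard, hvnorm⟩
    obtain ⟨J, hsub, -, hJcard⟩ := Finset.exists_subsuperset_card_eq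
      (Finset.subset_univ (Finset.univ.filter fun i => v i ≠ 0)) hvcard (by simpa using hkd)
    have hsum : ∑ i, v i * u i = ∑ i ∈ J, v i * u i := by
      refine (Finset.sum_subset (Finset.subset_univ J) ?_).symm
      intro x _ hx
      have hvx : v x = 0 := by
        by_contra h
        exact hx (hsub (Finset.mem_filter.mpr ⟨Finset.mem_univ _, h⟩))
      rw [hvx, zero_mul]
    show ∑ i, v i * u i ≤ D
    rw [hsum]
    calc ∑ i ∈ J, v i * u i
        ≤ Real.sqrt (∑ i ∈ J, v i ^ 2) * Real.sqrt (∑ i ∈ J, u i ^ 2) := cs_sum _ _ _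
      _ ≤ 1 * Real.sqrt (∑ i ∈ J, u i ^ 2) := by
          refine mul_le_mul_of_nonneg_right ?_ (Real.sqrt_nonneg _)
          calc Real.sqrt (∑ i ∈ J, v i ^ 2) ≤ Real.sqrt (∑ i, v i ^ 2) :=
              Real.sqrt_le_sqrt (Finset.sum_le_sum_of_subset_of_nonneg
                (Finset.subset_univ _) fun i _ _ => sq_nonneg _)
            _ = ‖v‖ := (eucl_norm_eq v).symm
            _ ≤ 1 := hvnorm
      _ = Real.sqrt (∑ i ∈ J, u i ^ 2) := one_mul _
      _ ≤ D := hDmem J hJcard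
  -- upper bound for L
  have hub : ∀ x ∈ L, x ≤ D := by
    rintro x ⟨w, hw, rfl⟩
    have hcl : w ∈ closure (kSupBall d k) :=
      mem_closure_of_gauge_le_one (convex_convexHull ℝ _)
        (subset_convexHull ℝ _ zero_mem_base)
        (absorbent_nhds_zero (ball_mem_nhds hk1 hkd)) hw
    have hcont : Continuous fun v : EuclideanSpace ℝ (Fin d) => ∑ i, v i * u i := by
      apply continuous_finset_sum
      intro i _
      exact ((EuclideanSpace.proj i : EuclideanSpace ℝ (Fin d) →L[ℝ] ℝ).continuous).mul
        continuous_const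
    have hsubcl : closure (kSupBall d k) ⊆
        {v : EuclideanSpace ℝ (Fin d) | ∑ i, v i * u i ≤ D} :=
      closure_minimal hhalf (isClosed_le hcont continuous_const)
    exact hsubcl hcl
  have h0L : (0 : ℝ) ∈ L := by
    refine ⟨0, ?_, by simp⟩
    rw [kSupNorm, gauge_zero]
    norm_num
  have hLbdd : BddAbove L := ⟨D, hub⟩
  -- lower bound: D ≤ sSup L
  have hlb : D ≤ sSup L := by
    apply csSup_le hSne
    rintro x ⟨I, hI, rfl⟩
    by_cases hz : ∑ i ∈ I, u i ^ 2 = 0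
    · rw [hz, Real.sqrt_zero]
      exact le_csSup hLbdd h0L
    · have hpos : 0 < ∑ i ∈ I, u i ^ 2 :=
        lt_of_le_of_ne (Finset.sum_nonneg fun i _ => sq_nonneg _) (Ne.symm hz)
      set s := Real.sqrt (∑ i ∈ I, u i ^ 2) with hs
      have hspos : 0 < s := Real.sqrt_pos.mpr hpos
      have hssq : s ^ 2 = ∑ i ∈ I, u i ^ 2 := Real.sq_sqrt hpos.le
      set w : EuclideanSpace ℝ (Fin d) :=
        WithLp.toLp 2 (fun i => if i ∈ I then u i / s else 0 : ∀ _ : Fin d, ℝ) with hwdef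
      have hwapp : ∀ i, w i = if i ∈ I then u i / s else 0 := fun i => rfl
      have hwsq : ∑ i, w i ^ 2 = 1 := by
        rw [← Finset.sum_subset (Finset.subset_univ I)
          (fun x _ hx => by rw [hwapp, if_neg hx]; ring)]
        have : ∀ i ∈ I, w i ^ 2 = u i ^ 2 / s ^ 2 := by
          intro i hi
          rw [hwapp, if_pos hi, div_pow]
        rw [Finset.sum_congr rfl this, ← Finset.sum_div, ← hssq, div_self (by positivity)]
      have hwmem : w ∈ kSupBall d k := by
        apply subset_convexHull ℝ _
        constructor
        · refine le_trans (Finset.card_le_card ?_) (le_of_eq hI)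
          intro j hj
          simp only [Finset.mem_filter, Finset.mem_univ, true_and] at hj
          by_contra hjI
          exact hj (by rw [hwapp, if_neg hjI])
        · rw [eucl_norm_eq, hwsq, Real.sqrt_one]
      have hwsum : ∑ i, w i * u i = s := by
        rw [← Finset.sum_subset (Finset.subset_univ I)
          (fun x _ hx => by rw [hwapp, if_neg hx, zero_mul])]
        have : ∀ i ∈ I, w i * u i = u i ^ 2 / s := by
          intro i hi
          rw [hwapp, if_pos hi]
          ring
        rw [Finset.sum_congr rfl this, ← Finset.sum_div, ← hssq, sq, mul_div_assoc,
          div_self hspos.ne', mul_one]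
      exact le_csSup hLbdd ⟨w, gauge_le_one_of_mem hwmem, hwsum.symm⟩
  have hfirst : sSup L = D := le_antisymm (csSup_le ⟨0, h0L⟩ hub) hlb
  -- Part 2
  set σ := Tuple.sort (fun j : Fin d => |u j|) with hσdef
  have hmono : Monotone ((fun j : Fin d => |u j|) ∘ σ) := Tuple.monotone_sort _
  let e : Fin k → Fin d := fun i => σ (Fin.rev (Fin.castLE hkd i))
  have he : Function.Injective e := fun a b hab =>
    Fin.castLE_injective hkd (Fin.rev_injective (σ.injective hab))
  set T : Finset (Fin d) := Finset.image e Finset.univ with hTdef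
  have hTcard : T.card = k := by
    rw [hTdef, Finset.card_image_of_injective _ he, Finset.card_univ, Fintype.card_fin]
  have hmemT : ∀ j : Fin d, j ∈ T ↔ d - k ≤ (σ.symm j : ℕ) := by
    intro j
    rw [hTdef, Finset.mem_image]
    constructor
    · rintro ⟨i, -, rfl⟩
      show d - k ≤ ((σ.symm (σ _) : Fin d) : ℕ)
      rw [Equiv.symm_apply_apply]
      have h1 : ((Fin.rev (Fin.castLE hkd i) : Fin d) : ℕ) = d - 1 - (i : ℕ) := by
        rw [Fin.val_rev]
        simp only [Fin.coe_castLE]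
        omega
      rw [h1]
      have := i.2
      omega
    · intro hj
      have hlt : d - 1 - ((σ.symm j : Fin d) : ℕ) < k := by
        have := (σ.symm j).2
        omega
      refine ⟨⟨d - 1 - ((σ.symm j : Fin d) : ℕ), hlt⟩, Finset.mem_univ _, ?_⟩
      show σ (Fin.rev (Fin.castLE hkd ⟨_, hlt⟩)) = j
      have hv : Fin.rev (Fin.castLE hkd ⟨d - 1 - ((σ.symm j : Fin d) : ℕ), hlt⟩) = σ.symm j := by
        apply Fin.ext
        rw [Fin.val_rev]
        simp only [Fin.coe_castLE]
        have := (σ.symm j).2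
        omega
      rw [hv, Equiv.apply_symm_apply]
  have hsep : ∀ t ∈ T, ∀ s, s ∉ T → u s ^ 2 ≤ u t ^ 2 := by
    intro t ht s hs
    rw [hmemT] at ht hs
    push_neg at hs
    have hle : σ.symm s ≤ σ.symm t := by
      rw [Fin.le_def]
      omega
    have habs := hmono hle
    simp only [Function.comp_apply] at habs
    rw [Equiv.apply_symm_apply, Equiv.apply_symm_apply] at habs
    calc u s ^ 2 = |u s| ^ 2 := (sq_abs _).symm
      _ ≤ |u t| ^ 2 := pow_le_pow_left₀ (abs_nonneg _) habs 2
      _ = u t ^ 2 := sq_abs _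
  have hsumT : ∑ i ∈ Finset.Icc 1 k, zD u i ^ 2 = ∑ i ∈ T, u i ^ 2 := by
    rw [hTdef, Finset.sum_image fun a _ b _ h => he h]
    refine Finset.sum_nbij' (i := fun a => (⟨min (a - 1) (k - 1), by omega⟩ : Fin k))
      (j := fun b => (b : ℕ) + 1) ?_ ?_ ?_ ?_ ?_
    · intro a _
      exact Finset.mem_univ _
    · intro b _
      have := b.2
      simp only [Finset.mem_Icc]
      omega
    · intro a ha
      simp only [Finset.mem_Icc] at ha
      simp only
      omega
    · intro b _
      have := b.2
      apply Fin.ext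
      simp only
      omega
    · intro a ha
      simp only [Finset.mem_Icc] at ha
      have hale : a ≤ d := ha.2.trans hkd
      have hzd : zD u a = absDown u ⟨a - 1, by omega⟩ := dif_pos ⟨ha.1, hale⟩
      rw [hzd]
      have habs : absDown u (⟨a - 1, by omega⟩ : Fin d)
          = |u (σ ((⟨a - 1, by omega⟩ : Fin d).rev))| := by
        rw [absDown, hσdef]
      rw [habs]
      have harg : e (⟨min (a - 1) (k - 1), by omega⟩ : Fin k)
          = σ ((⟨a - 1, by omega⟩ : Fin d).rev) := by
        show σ (Fin.rev (Fin.castLE hkd _)) = _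
        congr 1
        apply Fin.ext
        rw [Fin.val_rev, Fin.val_rev]
        simp only [Fin.coe_castLE]
        omega
      rw [harg, sq_abs]
  have hsecond : D = Real.sqrt (∑ i ∈ Finset.Icc 1 k, zD u i ^ 2) := by
    rw [hsumT]
    apply le_antisymm
    · apply csSup_le hSne
      rintro x ⟨I, hI, rfl⟩
      exact Real.sqrt_le_sqrt (exchange I T _ (by rw [hI, hTcard]) hsep)
    · exact hDmem T hTcard
  exact ⟨hfirst, hsecond⟩
end

section
/- Let 1 ≤ k ≤ d be integers and z_1 ≥ z_2 ≥ … ≥ z_d ≥ 0 real numbers, and suppose r ∈ {0, …, k−1} satisfies z_{k−r−1} > (1/(r+1)) ∑_{i=k−r}^d z_i ≥ z_{k−r} (with the convention z_0 = +∞). Then max{ ∑_{i=1}^{k−1} α_i z_i + α_k ∑_{i=k}^d z_i − (1/2) ∑_{i=1}^k α_i² : α_1 ≥ α_2 ≥ … ≥ α_k ≥ 0 } = (1/2)( ∑_{i=1}^{k−r−1} z_i² + (1/(r+1)) ( ∑_{i=k−r}^d z_i )² ), and the maximum is attained at α_i = z_i for i = 1, …, k−r−1 and α_i = (1/(r+1))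 ∑_{j=k−r}^d z_j for i = k−r, …, k. -/
set_option maxHeartbeats 1000000 in
/-- for `z_1 ≥ … ≥ z_d ≥ 0` and `r ∈ {0,…,k−1}` satisfying
`z_{k−r−1} > (1/(r+1)) ∑_{i=k−r}^d z_i ≥ z_{k−r}` (with `z_0 = +∞`, i.e. the left
inequality is vacuous when `r = k−1`), the maximum of
`∑_{i=1}^{k−1} αᵢ zᵢ + α_k ∑_{i=k}^d zᵢ − ½ ∑_{i=1}^k αᵢ²` over nonincreasing
nonnegative `α_1 ≥ … ≥ α_k ≥ 0` equals
`½(∑_{i=1}^{k−r−1} zᵢ² + (1/(r+1))(∑_{i=k−r}^d zᵢ)²)`, and it is attained at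
`αᵢ = zᵢ` for `i ≤ k−r−1` and `αᵢ = (1/(r+1)) ∑_{j=k−r}^d z_j` otherwise. -/
theorem statement2 (d k : ℕ) (hk1 : 1 ≤ k) (hkd : k ≤ d) (z : ℕ → ℝ)
    (hmono : ∀ i j : ℕ, 1 ≤ i → i ≤ j → j ≤ d → z j ≤ z i) (hnn : 0 ≤ z d)
    (r : ℕ) (hr : r < k)
    (hc1 : r = k - 1 ∨ (∑ i ∈ Finset.Icc (k - r) d, z i) / ((r : ℝ) + 1) < z (k - r - 1))
    (hc2 : z (k - r) ≤ (∑ i ∈ Finset.Icc (k - r) d, z i) / ((r : ℝ) + 1)) :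
    IsGreatest
      ((fun α : ℕ → ℝ => ∑ i ∈ Finset.Icc 1 (k - 1), α i * z i
          + α k * ∑ i ∈ Finset.Icc k d, z i
          - (1 / 2) * ∑ i ∈ Finset.Icc 1 k, α i ^ 2) ''
        {α : ℕ → ℝ | (∀ i j : ℕ, 1 ≤ i → i ≤ j → j ≤ k → α j ≤ α i) ∧ 0 ≤ α k})
      ((1 / 2) * (∑ i ∈ Finset.Icc 1 (k - r - 1), z i ^ 2
          + (∑ i ∈ Finset.Icc (k - r) d, z i) ^ 2 / ((r : ℝ) + 1))) ∧
    (fun α : ℕ → ℝ => ∑ i ∈ Finset.Icc 1 (k - 1), α i * z i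
          + α k * ∑ i ∈ Finset.Icc k d, z i
          - (1 / 2) * ∑ i ∈ Finset.Icc 1 k, α i ^ 2)
      (fun i => if i ≤ k - r - 1 then z i
          else (∑ j ∈ Finset.Icc (k - r) d, z j) / ((r : ℝ) + 1))
      = (1 / 2) * (∑ i ∈ Finset.Icc 1 (k - r - 1), z i ^ 2
          + (∑ i ∈ Finset.Icc (k - r) d, z i) ^ 2 / ((r : ℝ) + 1)) := by
  have hIoc : ∀ p q : ℕ, 1 ≤ p → Finset.Icc p q = Finset.Ioc (p - 1) q := by
    intro p q hp; ext i; simp only [Finset.mem_Icc, Finset.mem_Ioc]; omega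
  set a := k - r with ha
  have ha1 : 1 ≤ a := by omega
  have haK : a ≤ k := by omega
  set S : ℝ := ∑ i ∈ Finset.Icc a d, z i with hS
  set m : ℝ := S / ((r : ℝ) + 1) with hm
  have hr1 : (0 : ℝ) < (r : ℝ) + 1 := by positivity
  have hmS : ((r : ℝ) + 1) * m = S := by rw [hm]; field_simp
  set T : ℝ := ∑ i ∈ Finset.Ioc (k - 1) d, z i with hT
  have hTdef : ∑ i ∈ Finset.Icc k d, z i = T := by rw [hT, hIoc k d hk1]
  have hznn : ∀ i, 1 ≤ i → i ≤ d → 0 ≤ z i := fun i h1 h2 =>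
    hnn.trans (hmono i d h1 h2 le_rfl)
  have hSsplit : (∑ i ∈ Finset.Ioc (a - 1) (k - 1), z i) + T = S := by
    rw [hS, hT, hIoc a d ha1]
    exact Finset.sum_Ioc_consecutive z (by omega) (by omega)
  set w : ℕ → ℝ := fun i => if i = k then T else z i with hw
  have hwk : w k = T := by simp [hw]
  have hwlt : ∀ i, i < k → w i = z i := by intro i hi; simp [hw, Nat.ne_of_lt hi]
  have hsplitk : ∀ g : ℕ → ℝ, ∑ i ∈ Finset.Ioc 0 k, g i
      = (∑ i ∈ Finset.Ioc 0 (k - 1), g i) + g k := by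
    intro g
    have hkk : k - 1 + 1 = k := by omega
    calc ∑ i ∈ Finset.Ioc 0 k, g i = ∑ i ∈ Finset.Ioc 0 (k - 1 + 1), g i := by rw [hkk]
      _ = (∑ i ∈ Finset.Ioc 0 (k - 1), g i) + g (k - 1 + 1) :=
          Finset.sum_Ioc_succ_top (Nat.zero_le _) g
      _ = _ := by rw [hkk]
  have hsplitak : ∀ g : ℕ → ℝ, ∑ i ∈ Finset.Ioc (a - 1) k, g i
      = (∑ i ∈ Finset.Ioc (a - 1) (k - 1), g i) + g k := by
    intro g
    have hkk : k - 1 + 1 = k := by omega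
    calc ∑ i ∈ Finset.Ioc (a - 1) k, g i
        = ∑ i ∈ Finset.Ioc (a - 1) (k - 1 + 1), g i := by rw [hkk]
      _ = (∑ i ∈ Finset.Ioc (a - 1) (k - 1), g i) + g (k - 1 + 1) :=
          Finset.sum_Ioc_succ_top (by omega) g
      _ = _ := by rw [hkk]
  have hsplit2 : ∀ g : ℕ → ℝ, ∑ i ∈ Finset.Ioc 0 k, g i
      = (∑ i ∈ Finset.Ioc 0 (a - 1), g i) + ∑ i ∈ Finset.Ioc (a - 1) k, g i :=
    fun g => (Finset.sum_Ioc_consecutive g (by omega) (by omega)).symm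
  have hobj : ∀ α : ℕ → ℝ,
      (∑ i ∈ Finset.Icc 1 (k - 1), α i * z i + α k * ∑ i ∈ Finset.Icc k d, z i
        - (1 / 2) * ∑ i ∈ Finset.Icc 1 k, α i ^ 2)
      = ∑ i ∈ Finset.Ioc 0 k, (α i * w i - (1 / 2) * α i ^ 2) := by
    intro α
    have h1 : ∑ i ∈ Finset.Ioc 0 (k - 1), α i * w i
        = ∑ i ∈ Finset.Ioc 0 (k - 1), α i * z i := by
      refine Finset.sum_congr rfl fun i hi => ?_
      rw [hwlt i (by simp only [Finset.mem_Ioc] at hi; omega)]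
    rw [Finset.sum_sub_distrib, hIoc 1 (k - 1) le_rfl, hIoc 1 k le_rfl, hTdef,
      hsplitk (fun i => α i * w i), hsplitk (fun i => α i ^ 2),
      hsplitk (fun i => (1 / 2) * α i ^ 2), hwk, h1, ← Finset.mul_sum,
      show (1 : ℕ) - 1 = 0 from rfl]
    ring
  set A : ℕ → ℝ := fun i => if i ≤ a - 1 then z i else m with hA
  have hAle : ∀ i, i ≤ a - 1 → A i = z i := by intro i hi; simp [hA, hi]
  have hAgt : ∀ i, a - 1 < i → A i = m := by
    intro i hi; simp [hA, Nat.not_le.mpr hi]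
  have hAk : A k = m := hAgt k (by omega)
  have hS0 : 0 ≤ S := by
    rw [hS]
    exact Finset.sum_nonneg fun i hi => by
      simp only [Finset.mem_Icc] at hi; exact hznn i (by omega) hi.2
  have hm0 : 0 ≤ m := by rw [hm]; positivity
  have hcard : (∑ _i ∈ Finset.Ioc (a - 1) k, m) = ((r : ℝ) + 1) * m := by
    rw [Finset.sum_const, Nat.card_Ioc, nsmul_eq_mul,
      show k - (a - 1) = r + 1 from by omega]
    push_cast; ring
  have hwsum : ∑ i ∈ Finset.Ioc (a - 1) k, w i = S := by
    rw [hsplitak w, hwk,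
      show ∑ i ∈ Finset.Ioc (a - 1) (k - 1), w i
          = ∑ i ∈ Finset.Ioc (a - 1) (k - 1), z i from
        Finset.sum_congr rfl fun i hi =>
          hwlt i (by simp only [Finset.mem_Ioc] at hi; omega)]
    exact hSsplit
  have key : ∑ i ∈ Finset.Ioc 0 k, (A i * w i - (1 / 2) * A i ^ 2)
      = (1 / 2) * (∑ i ∈ Finset.Icc 1 (a - 1), z i ^ 2 + S ^ 2 / ((r : ℝ) + 1)) := by
    have h1 : ∑ i ∈ Finset.Ioc 0 (a - 1), (A i * w i - (1 / 2) * A i ^ 2)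
        = ∑ i ∈ Finset.Ioc 0 (a - 1), ((1 / 2) * z i ^ 2) := by
      refine Finset.sum_congr rfl fun i hi => ?_
      simp only [Finset.mem_Ioc] at hi
      rw [hAle i hi.2, hwlt i (by omega)]; ring
    have h2 : ∑ i ∈ Finset.Ioc (a - 1) k, (A i * w i - (1 / 2) * A i ^ 2)
        = m * S - (1 / 2) * (((r : ℝ) + 1) * m ^ 2) := by
      have e1 : ∑ i ∈ Finset.Ioc (a - 1) k, (A i * w i - (1 / 2) * A i ^ 2)
          = ∑ i ∈ Finset.Ioc (a - 1) k, (m * w i - (1 / 2) * m ^ 2) := by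
        refine Finset.sum_congr rfl fun i hi => ?_
        simp only [Finset.mem_Ioc] at hi
        rw [hAgt i hi.1]
      rw [e1, Finset.sum_sub_distrib, ← Finset.mul_sum, hwsum, Finset.sum_const,
        Nat.card_Ioc, nsmul_eq_mul, show k - (a - 1) = r + 1 from by omega]
      push_cast; ring
    have hms : m * S = S ^ 2 / ((r : ℝ) + 1) := by rw [hm]; field_simp
    have hm2 : ((r : ℝ) + 1) * m ^ 2 = S ^ 2 / ((r : ℝ) + 1) := by
      rw [hm]; field_simp
    rw [hsplit2 (fun i => A i * w i - (1 / 2) * A i ^ 2), h1, h2, hms, hm2,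
      hIoc 1 (a - 1) le_rfl, show (1 : ℕ) - 1 = 0 from rfl, ← Finset.mul_sum]
    ring
  have hAmem : (∀ i j : ℕ, 1 ≤ i → i ≤ j → j ≤ k → A j ≤ A i) ∧ 0 ≤ A k := by
    refine ⟨fun i j h1 hij hjk => ?_, by rw [hAk]; exact hm0⟩
    by_cases hi : i ≤ a - 1
    · by_cases hj : j ≤ a - 1
      · rw [hAle i hi, hAle j hj]
        exact hmono i j h1 hij (by omega)
      · rw [hAle i hi, hAgt j (by omega)]
        rcases hc1 with h | h
        · omega
        · have : z (a - 1) ≤ z i := hmono i (a - 1) h1 hi (by omega)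
          linarith
    · rw [hAgt i (by omega), hAgt j (by omega)]
  have hub : ∀ α : ℕ → ℝ, (∀ i j : ℕ, 1 ≤ i → i ≤ j → j ≤ k → α j ≤ α i) → 0 ≤ α k →
      ∑ i ∈ Finset.Ioc 0 k, (α i * w i - (1 / 2) * α i ^ 2)
        ≤ ∑ i ∈ Finset.Ioc 0 k, (A i * w i - (1 / 2) * A i ^ 2) := by
    intro α hαm hαk
    have hd : ∑ i ∈ Finset.Ioc 0 k, (α i * w i - (1 / 2) * α i ^ 2)
        - ∑ i ∈ Finset.Ioc 0 k, (A i * w i - (1 / 2) * A i ^ 2)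
        = ∑ i ∈ Finset.Ioc 0 k,
            ((α i - A i) * (w i - A i) - (1 / 2) * (α i - A i) ^ 2) := by
      rw [← Finset.sum_sub_distrib]
      exact Finset.sum_congr rfl fun i _ => by ring
    have h1 : ∑ i ∈ Finset.Ioc 0 k,
        ((α i - A i) * (w i - A i) - (1 / 2) * (α i - A i) ^ 2)
        ≤ ∑ i ∈ Finset.Ioc 0 k, (α i - A i) * (w i - A i) := by
      refine Finset.sum_le_sum fun i _ => ?_
      nlinarith [sq_nonneg (α i - A i)]
    have h2 : ∑ i ∈ Finset.Ioc 0 k, (α i - A i) * (w i - A i)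
        = ∑ i ∈ Finset.Ioc (a - 1) k, (α i - m) * (w i - m) := by
      rw [hsplit2 (fun i => (α i - A i) * (w i - A i))]
      have hz0 : ∑ i ∈ Finset.Ioc 0 (a - 1), (α i - A i) * (w i - A i) = 0 := by
        refine Finset.sum_eq_zero fun i hi => ?_
        simp only [Finset.mem_Ioc] at hi
        rw [hAle i hi.2, hwlt i (by omega)]; ring
      rw [hz0, zero_add]
      refine Finset.sum_congr rfl fun i hi => ?_
      simp only [Finset.mem_Ioc] at hi
      rw [hAgt i hi.1]
    have h3 : ∑ i ∈ Finset.Ioc (a - 1) k, (α i - m) * (w i - m)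
        ≤ ∑ i ∈ Finset.Ioc (a - 1) k, (α k - m) * (w i - m) := by
      refine Finset.sum_le_sum fun i hi => ?_
      simp only [Finset.mem_Ioc] at hi
      rcases eq_or_lt_of_le hi.2 with h | h
      · rw [h]
      · have hwi : w i = z i := hwlt i h
        have hzi : z i ≤ m := le_trans (hmono a i ha1 (by omega) (by omega)) hc2
        have hαi : α k ≤ α i := hαm i k (by omega) hi.2 le_rfl
        have hkey : (α i - α k) * (w i - m) ≤ 0 :=
          mul_nonpos_of_nonneg_of_nonpos (by linarith) (by rw [hwi]; linarith)
        nlinarith [hkey]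
    have h4 : ∑ i ∈ Finset.Ioc (a - 1) k, (α k - m) * (w i - m) = 0 := by
      rw [← Finset.mul_sum, Finset.sum_sub_distrib, hwsum, hcard, hmS]; ring
    linarith
  refine ⟨⟨⟨A, hAmem, ?_⟩, ?_⟩, ?_⟩
  · show (∑ i ∈ Finset.Icc 1 (k - 1), A i * z i + A k * ∑ i ∈ Finset.Icc k d, z i
        - (1 / 2) * ∑ i ∈ Finset.Icc 1 k, A i ^ 2) = _
    rw [hobj A, key]
  · rintro y ⟨α, hαmem, rfl⟩
    show (∑ i ∈ Finset.Icc 1 (k - 1), α i * z i + α k * ∑ i ∈ Finset.Icc k d, z i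
        - (1 / 2) * ∑ i ∈ Finset.Icc 1 k, α i ^ 2) ≤ _
    rw [hobj α]
    calc ∑ i ∈ Finset.Ioc 0 k, (α i * w i - (1 / 2) * α i ^ 2)
        ≤ ∑ i ∈ Finset.Ioc 0 k, (A i * w i - (1 / 2) * A i ^ 2) :=
          hub α hαmem.1 hαmem.2
      _ = _ := by rw [key]
  · show (∑ i ∈ Finset.Icc 1 (k - 1), A i * z i + A k * ∑ i ∈ Finset.Icc k d, z i
        - (1 / 2) * ∑ i ∈ Finset.Icc 1 k, A i ^ 2) = _
    rw [hobj A, key]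
end

section
/- For every integer 1 ≤ k ≤ d and every u ∈ ℝ^d, the dual norm of the elastic-net norm ‖w‖_k^el = max{‖w‖₂, ‖w‖₁/√k} is given by ‖u‖_k^{el*} = inf{ ‖a‖₂ + √k · ‖u − a‖_∞ : a ∈ ℝ^d }, where ‖u‖_k^{el*} := sup{⟨w, u⟩ : ‖w‖_k^el ≤ 1}. -/
section dualHelpers

lemma rsign_mul_self (x : ℝ) : Real.sign x * x = |x| := by
  rcases lt_trichotomy x 0 with h | h | h
  · rw [Real.sign_of_neg h, abs_of_neg h]; ring
  · simp [h]
  · rw [Real.sign_of_pos h, abs_of_pos h]; ring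

lemma abs_rsign_of_ne (x : ℝ) (h : x ≠ 0) : |Real.sign x| = 1 := by
  rcases lt_trichotomy x 0 with h1 | h1 | h1
  · rw [Real.sign_of_neg h1]; norm_num
  · exact absurd h1 h
  · rw [Real.sign_of_pos h1]; norm_num

noncomputable def pth {d : ℕ} (u : Fin d → ℝ) (τ : ℝ) (i : Fin d) : ℝ := max (|u i| - τ) 0

noncomputable def sth {d : ℕ} (u : Fin d → ℝ) (τ : ℝ) : EuclideanSpace ℝ (Fin d) :=
  WithLp.toLp 2 (fun i => Real.sign (u i) * pth u τ i)

noncomputable def Ath {d : ℕ} (u : Fin d → ℝ) (τ : ℝ) : ℝ := ∑ i, pth u τ i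

noncomputable def Bth {d : ℕ} (u : Fin d → ℝ) (τ : ℝ) : ℝ := Real.sqrt (∑ i, (pth u τ i)^2)

section helpers
variable {d : ℕ} (u : Fin d → ℝ) (τ : ℝ)

lemma pth_nonneg (i : Fin d) : 0 ≤ pth u τ i := le_max_right _ _

lemma ne_of_pth_pos {i : Fin d} (hτ : 0 ≤ τ) (h : 0 < pth u τ i) : u i ≠ 0 := by
  intro h0
  rw [pth, h0] at h
  simp at h
  linarith

lemma abs_sth (hτ : 0 ≤ τ) (i : Fin d) : |sth u τ i| = pth u τ i := by
  show |Real.sign (u i) * pth u τ i| = pth u τ i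
  rcases eq_or_lt_of_le (pth_nonneg u τ i) with h | h
  · rw [← h]; simp
  · rw [abs_mul, abs_rsign_of_ne _ (ne_of_pth_pos u τ hτ h), one_mul,
      abs_of_nonneg (pth_nonneg u τ i)]

lemma sth_mul (hτ : 0 ≤ τ) (i : Fin d) :
    sth u τ i * u i = (pth u τ i)^2 + τ * pth u τ i := by
  show Real.sign (u i) * pth u τ i * u i = _
  rcases le_or_gt (|u i|) τ with h | h
  · simp [pth, max_eq_right (by linarith : |u i| - τ ≤ 0)]
  · have hp : pth u τ i = |u i| - τ := max_eq_left (by linarith)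
    rw [mul_comm (Real.sign (u i)), mul_assoc, rsign_mul_self, hp]; ring

lemma abs_sub_sth (hτ : 0 ≤ τ) (i : Fin d) : |u i - sth u τ i| = min (|u i|) τ := by
  show |u i - Real.sign (u i) * pth u τ i| = _
  rcases le_or_gt (|u i|) τ with h | h
  · simp [pth, max_eq_right (by linarith : |u i| - τ ≤ 0), min_eq_left h]
  · have hp : pth u τ i = |u i| - τ := max_eq_left (by linarith)
    have hs := rsign_mul_self (u i)
    have hne : u i ≠ 0 := by
      intro h0; rw [h0] at h; simp at h; linarith
    have h2 : u i - Real.sign (u i) * pth u τ i = Real.sign (u i) * τ := by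
      rcases lt_trichotomy (u i) 0 with h1 | h1 | h1
      · rw [Real.sign_of_neg h1] at hs ⊢; rw [hp]; linarith
      · exact absurd h1 hne
      · rw [Real.sign_of_pos h1] at hs ⊢; rw [hp]; linarith
    rw [h2, abs_mul, abs_rsign_of_ne _ hne, one_mul, abs_of_nonneg hτ, min_eq_right h.le]

lemma sum_abs_sth (hτ : 0 ≤ τ) : ∑ i, |sth u τ i| = Ath u τ :=
  Finset.sum_congr rfl fun i _ => abs_sth u τ hτ i

lemma norm_sth (hτ : 0 ≤ τ) : ‖sth u τ‖ = Bth u τ := by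
  rw [EuclideanSpace.norm_eq, Bth]
  congr 1
  refine Finset.sum_congr rfl fun i _ => ?_
  rw [Real.norm_eq_abs, abs_sth u τ hτ i]

lemma Bth_nonneg : 0 ≤ Bth u τ := Real.sqrt_nonneg _

lemma Ath_nonneg : 0 ≤ Ath u τ := Finset.sum_nonneg fun i _ => pth_nonneg u τ i

lemma Bth_sq : (Bth u τ)^2 = ∑ i, (pth u τ i)^2 := by
  rw [Bth, Real.sq_sqrt (Finset.sum_nonneg fun i _ => sq_nonneg _)]

lemma sum_sth_mul (hτ : 0 ≤ τ) : ∑ i, sth u τ i * u i = (Bth u τ)^2 + τ * Ath u τ := by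
  rw [Bth_sq, Ath, Finset.mul_sum, ← Finset.sum_add_distrib]
  exact Finset.sum_congr rfl fun i _ => sth_mul u τ hτ i

lemma continuous_hth (k : ℕ) : Continuous (fun τ => Ath u τ - Real.sqrt k * Bth u τ) := by
  have hp : ∀ i : Fin d, Continuous (fun τ => pth u τ i) := fun i =>
    (continuous_const.sub continuous_id).max continuous_const
  have hA : Continuous (Ath u) := continuous_finset_sum _ fun i _ => hp i
  have hB : Continuous (Bth u) :=
    Real.continuous_sqrt.comp (continuous_finset_sum _ fun i _ => (hp i).pow 2)
  exact hA.sub (continuous_const.mul hB)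

end helpers

theorem key (d k : ℕ) (hk1 : 1 ≤ k) (hkd : k ≤ d) (u : EuclideanSpace ℝ (Fin d)) :
    ∃ w a : EuclideanSpace ℝ (Fin d), elNet d k w ≤ 1 ∧
      ‖a‖ + Real.sqrt k * ⨆ i, |u i - a i| = ∑ i, w i * u i := by
  classical
  have hd : 1 ≤ d := le_trans hk1 hkd
  haveI : Nonempty (Fin d) := ⟨⟨0, by omega⟩⟩
  have hsk0 : 0 < Real.sqrt k := Real.sqrt_pos.mpr (by positivity)
  have hbdd : ∀ f : Fin d → ℝ, BddAbove (Set.range f) :=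
    fun f => Set.Finite.bddAbove (Set.finite_range f)
  by_cases hu : ∀ i, u i = 0
  · refine ⟨0, 0, ?_, ?_⟩
    · have : elNet d k 0 = 0 := by simp [elNet]
      rw [this]; norm_num
    · have h1 : ∀ i : Fin d, |u i - (0 : EuclideanSpace ℝ (Fin d)) i| = 0 := by
        intro i; simp [hu i]
      have h2 : (⨆ i, |u i - (0 : EuclideanSpace ℝ (Fin d)) i|) = 0 := by
        simp only [h1]; exact ciSup_const
      have h3 : ∑ i, (0 : EuclideanSpace ℝ (Fin d)) i * u i = 0 := by simp
      rw [h2, h3]; simp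
  -- u ≠ 0
  push_neg at hu
  obtain ⟨i₁, hi₁⟩ := hu
  set M : ℝ := Finset.univ.sup' Finset.univ_nonempty (fun i => |u i|) with hMdef
  have hM : ∀ i, |u i| ≤ M := fun i => by
    rw [hMdef]; exact Finset.le_sup' (fun j => |u j|) (Finset.mem_univ i)
  have hune0 : (Finset.univ : Finset (Fin d)).Nonempty := Finset.univ_nonempty
  obtain ⟨i₀, -, hi₀⟩ := Finset.exists_mem_eq_sup' hune0 (fun i => |u i|)
  rw [← hMdef] at hi₀
  have hM0 : 0 < M := lt_of_lt_of_le (abs_pos.mpr hi₁) (hM i₁)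
  set h : ℝ → ℝ := fun τ => Ath u τ - Real.sqrt k * Bth u τ with hhdef
  -- common construction from a good τ
  have build : ∀ τ : ℝ, 0 ≤ τ → τ < M → h τ ≤ 0 → (τ = 0 ∨ h τ = 0) →
      ∃ w a : EuclideanSpace ℝ (Fin d), elNet d k w ≤ 1 ∧
        ‖a‖ + Real.sqrt k * ⨆ i, |u i - a i| = ∑ i, w i * u i := by
    intro τ hτ0 hτM hh hdisj
    have hpi₀ : pth u τ i₀ = M - τ := by
      rw [pth, ← hi₀, max_eq_left (by linarith)]
    have hB : 0 < Bth u τ := by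
      rw [Bth]
      apply Real.sqrt_pos.mpr
      have h1 : (0:ℝ) < (pth u τ i₀)^2 := by
        rw [hpi₀]; have : 0 < M - τ := by linarith
        exact pow_pos this 2
      exact lt_of_lt_of_le h1
        (Finset.single_le_sum (f := fun i => (pth u τ i)^2)
          (fun i _ => sq_nonneg _) (Finset.mem_univ i₀))
    set B := Bth u τ with hBdef
    have hAB : Ath u τ ≤ Real.sqrt k * B := by
      have := hh; rw [hhdef] at this; simp only at this; linarith
    refine ⟨B⁻¹ • sth u τ, sth u τ, ?_, ?_⟩
    · have hnorm : ‖B⁻¹ • sth u τ‖ = 1 := by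
        rw [norm_smul, Real.norm_eq_abs, abs_of_pos (inv_pos.mpr hB), norm_sth u τ hτ0,
          ← hBdef, inv_mul_cancel₀ (ne_of_gt hB)]
      have hsum : ∑ i, |(B⁻¹ • sth u τ) i| = B⁻¹ * Ath u τ := by
        rw [← sum_abs_sth u τ hτ0, Finset.mul_sum]
        refine Finset.sum_congr rfl fun i _ => ?_
        rw [PiLp.smul_apply, smul_eq_mul, abs_mul, abs_of_pos (inv_pos.mpr hB)]
      rw [elNet, hnorm, hsum]
      apply max_le le_rfl
      rw [div_le_one hsk0, inv_mul_le_iff₀ hB]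
      linarith [hAB]
    · have hnorm : ‖sth u τ‖ = B := norm_sth u τ hτ0
      have hsup : (⨆ i, |u i - sth u τ i|) = τ := by
        apply le_antisymm
        · apply ciSup_le
          intro i
          rw [abs_sub_sth u τ hτ0 i]
          exact min_le_right _ _
        · have h1 : |u i₀ - sth u τ i₀| = τ := by
            rw [abs_sub_sth u τ hτ0 i₀, ← hi₀, min_eq_right (le_of_lt hτM)]
          calc τ = |u i₀ - sth u τ i₀| := h1.symm
            _ ≤ ⨆ i, |u i - sth u τ i| :=
                le_ciSup (f := fun i => |u i - sth u τ i|) (hbdd _) i₀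
      have hrhs : ∑ i, (B⁻¹ • sth u τ) i * u i = B⁻¹ * (B^2 + τ * Ath u τ) := by
        have e1 : ∑ i, (B⁻¹ • sth u τ) i * u i = B⁻¹ * ∑ i, sth u τ i * u i := by
          rw [Finset.mul_sum]
          refine Finset.sum_congr rfl fun i _ => ?_
          rw [PiLp.smul_apply, smul_eq_mul]; ring
        rw [e1, sum_sth_mul u τ hτ0, ← hBdef]
      rw [hnorm, hsup, hrhs]
      rcases hdisj with h0 | h0
      · rw [h0]
        field_simp
        ring
      · have hAeq : Ath u τ = Real.sqrt k * B := by
          rw [hhdef] at h0; simp only at h0; linarith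
        rw [hAeq]
        field_simp
  by_cases hP : ∃ τ, 0 ≤ τ ∧ τ < M ∧ h τ ≤ 0
  · by_cases h00 : h 0 ≤ 0
    · exact build 0 le_rfl hM0 h00 (Or.inl rfl)
    · push_neg at h00
      obtain ⟨τ₁, hτ₁0, hτ₁M, hτ₁⟩ := hP
      have hiv := intermediate_value_Icc' hτ₁0 ((continuous_hth u k).continuousOn)
      have h0mem : (0:ℝ) ∈ Set.Icc (h τ₁) (h 0) := ⟨hτ₁, le_of_lt h00⟩
      obtain ⟨c, hc, hceq⟩ := hiv h0mem
      exact build c hc.1 (lt_of_le_of_lt hc.2 hτ₁M) (le_of_eq hceq) (Or.inr hceq)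
  · push_neg at hP
    set F := Finset.univ.filter (fun i => |u i| = M) with hFdef
    set m := F.card with hmdef
    have hi₀F : i₀ ∈ F := Finset.mem_filter.mpr ⟨Finset.mem_univ _, hi₀.symm⟩
    have hm1 : 1 ≤ m := Finset.card_pos.mpr ⟨i₀, hi₀F⟩
    have hmpos : (0:ℝ) < (m:ℝ) := by exact_mod_cast hm1
    -- prove k ≤ m
    have hkm : k ≤ m := by
      by_cases hall : ∀ i : Fin d, |u i| = M
      · have hFu : F = Finset.univ := by
          rw [hFdef]
          exact Finset.filter_true_of_mem fun i _ => hall i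
        have : m = d := by rw [hmdef, hFu, Finset.card_univ, Fintype.card_fin]
        omega
      · push_neg at hall
        obtain ⟨j, hj⟩ := hall
        set G := Finset.univ.filter (fun i => ¬ |u i| = M) with hGdef
        have hjG : j ∈ G := Finset.mem_filter.mpr ⟨Finset.mem_univ _, hj⟩
        have hGne : G.Nonempty := ⟨j, hjG⟩
        set z := G.sup' hGne (fun i => |u i|) with hzdef
        have hzM : z < M := by
          rw [hzdef, Finset.sup'_lt_iff]
          intro i hi
          exact lt_of_le_of_ne (hM i) (Finset.mem_filter.mp hi).2
        have hz0 : 0 ≤ z := le_trans (abs_nonneg (u j)) (Finset.le_sup' (fun i => |u i|) hjG)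
        set τ := (z + M)/2 with hτdef
        have hτ0 : 0 ≤ τ := by rw [hτdef]; linarith
        have hτM : τ < M := by rw [hτdef]; linarith
        have hzτ : z < τ := by rw [hτdef]; linarith
        have hMτ : 0 < M - τ := by linarith
        have hpth : ∀ i, pth u τ i = if |u i| = M then M - τ else 0 := by
          intro i
          split_ifs with hi
          · rw [pth, hi, max_eq_left (by linarith)]
          · have h2 : |u i| ≤ z :=
              Finset.le_sup' (fun i => |u i|) (Finset.mem_filter.mpr ⟨Finset.mem_univ i, hi⟩)
            rw [pth, max_eq_right (by linarith)]
        have hA : Ath u τ = m * (M - τ) := by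
          rw [Ath]
          simp only [hpth]
          rw [← Finset.sum_filter, ← hFdef, Finset.sum_const, nsmul_eq_mul, ← hmdef]
        have hBsq : ∑ i, (pth u τ i)^2 = m * (M - τ)^2 := by
          have e : ∀ i, (pth u τ i)^2 = if |u i| = M then (M - τ)^2 else 0 := by
            intro i; rw [hpth i]; split_ifs <;> simp
          simp only [e]
          rw [← Finset.sum_filter, ← hFdef, Finset.sum_const, nsmul_eq_mul, ← hmdef]
        have hB : Bth u τ = Real.sqrt m * (M - τ) := by
          rw [Bth, hBsq, Real.sqrt_mul (by positivity), Real.sqrt_sq (by linarith)]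
        have hτpos := hP τ hτ0 hτM
        rw [hhdef] at hτpos
        simp only at hτpos
        rw [hA, hB] at hτpos
        -- 0 < m(M-τ) - √k * (√m * (M-τ)) fails: hτpos : ¬ (... ≤ 0)
        have hlt : Real.sqrt k * Real.sqrt m < (m:ℝ) := by
          have h1 := hτpos
          nlinarith
        have hsm : 0 < Real.sqrt (m:ℝ) := Real.sqrt_pos.mpr hmpos
        have h2 : Real.sqrt (k:ℝ) < Real.sqrt (m:ℝ) := by
          have := Real.sq_sqrt (le_of_lt hmpos)
          nlinarith
        have h3 : (k:ℝ) < (m:ℝ) := by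
          have := Real.sqrt_lt_sqrt_iff (x := (k:ℝ)) (y := (m:ℝ)) (by positivity)
          exact this.mp h2
        exact_mod_cast le_of_lt h3
    -- construct witness
    set c : ℝ := Real.sqrt k / m with hcdef
    have hc0 : 0 < c := div_pos hsk0 hmpos
    set w : EuclideanSpace ℝ (Fin d) :=
      WithLp.toLp 2 (fun i => if |u i| = M then Real.sign (u i) * c else 0) with hwdef
    have hwapp : ∀ i, w i = if |u i| = M then Real.sign (u i) * c else 0 := fun i => rfl
    have hune : ∀ i, |u i| = M → u i ≠ 0 := by
      intro i hi h0
      rw [h0] at hi; simp at hi; linarith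
    have habs : ∀ i, |w i| = if |u i| = M then c else 0 := by
      intro i
      rw [hwapp i]
      split_ifs with hi
      · rw [abs_mul, abs_rsign_of_ne _ (hune i hi), one_mul, abs_of_pos hc0]
      · simp
    have hsum1 : ∑ i, |w i| = m * c := by
      simp only [habs]
      rw [← Finset.sum_filter, ← hFdef, Finset.sum_const, nsmul_eq_mul, ← hmdef]
    have hsumsq : ∑ i, (w i)^2 = m * c^2 := by
      have e : ∀ i, (w i)^2 = if |u i| = M then c^2 else 0 := by
        intro i; rw [← sq_abs, habs i]; split_ifs <;> simp
      simp only [e]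
      rw [← Finset.sum_filter, ← hFdef, Finset.sum_const, nsmul_eq_mul, ← hmdef]
    have hmc : (m:ℝ) * c = Real.sqrt k := by
      rw [hcdef]; field_simp
    have hnormw : ‖w‖ = Real.sqrt ((m:ℝ) * c^2) := by
      rw [EuclideanSpace.norm_eq, ← hsumsq]
      congr 1
      exact Finset.sum_congr rfl fun i _ => by rw [Real.norm_eq_abs, sq_abs]
    refine ⟨w, 0, ?_, ?_⟩
    · rw [elNet, hnormw, hsum1, hmc, div_self (ne_of_gt hsk0)]
      apply max_le _ le_rfl
      have e1 : (m:ℝ) * c^2 = (k:ℝ) / m := by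
        rw [hcdef]
        rw [div_pow, Real.sq_sqrt (by positivity : (0:ℝ) ≤ (k:ℝ))]
        field_simp
      rw [e1]
      have : (k:ℝ) / m ≤ 1 := by
        rw [div_le_one hmpos]
        exact_mod_cast hkm
      calc Real.sqrt ((k:ℝ)/m) ≤ Real.sqrt 1 := Real.sqrt_le_sqrt this
        _ = 1 := Real.sqrt_one
    · have hsup : (⨆ i, |u i - (0 : EuclideanSpace ℝ (Fin d)) i|) = M := by
        have e : ∀ i : Fin d, |u i - (0 : EuclideanSpace ℝ (Fin d)) i| = |u i| := by
          intro i; simp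
        simp only [e]
        apply le_antisymm (ciSup_le hM)
        rw [hi₀]
        exact le_ciSup (f := fun i => |u i|) (hbdd _) i₀
      have hsmul : ∑ i, w i * u i = Real.sqrt k * M := by
        have e : ∀ i, w i * u i = if |u i| = M then c * M else 0 := by
          intro i
          rw [hwapp i]
          split_ifs with hi
          · rw [mul_assoc, mul_comm c (u i), ← mul_assoc, rsign_mul_self, hi]; ring
          · simp
        simp only [e]
        rw [← Finset.sum_filter, ← hFdef, Finset.sum_const, nsmul_eq_mul, ← hmdef,
          ← mul_assoc, hmc]
      rw [hsup, hsmul]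
      simp

end dualHelpers

/-- the dual norm of the elastic-net norm is
`‖u‖ₖᵉˡ* = inf{‖a‖₂ + √k·‖u − a‖_∞ : a ∈ ℝᵈ}`. -/
theorem statement4 (d k : ℕ) (hk1 : 1 ≤ k) (hkd : k ≤ d) (u : EuclideanSpace ℝ (Fin d)) :
    sSup {x : ℝ | ∃ w : EuclideanSpace ℝ (Fin d), elNet d k w ≤ 1 ∧ x = ∑ i, w i * u i}
      = sInf {x : ℝ | ∃ a : EuclideanSpace ℝ (Fin d),
          x = ‖a‖ + Real.sqrt k * ⨆ i, |u i - a i|} := by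
  have hd : 1 ≤ d := le_trans hk1 hkd
  haveI : Nonempty (Fin d) := ⟨⟨0, by omega⟩⟩
  have hsk0 : 0 < Real.sqrt k := Real.sqrt_pos.mpr (by positivity)
  set T := {x : ℝ | ∃ w : EuclideanSpace ℝ (Fin d), elNet d k w ≤ 1 ∧ x = ∑ i, w i * u i}
    with hT
  set S := {x : ℝ | ∃ a : EuclideanSpace ℝ (Fin d),
      x = ‖a‖ + Real.sqrt k * ⨆ i, |u i - a i|} with hS
  have hsupb : ∀ a : EuclideanSpace ℝ (Fin d), ∀ i, |u i - a i| ≤ ⨆ j, |u j - a j| :=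
    fun a i => le_ciSup (f := fun j => |u j - a j|) (Set.Finite.bddAbove (Set.finite_range _)) i
  have hsup_nonneg : ∀ a : EuclideanSpace ℝ (Fin d), (0:ℝ) ≤ ⨆ j, |u j - a j| := fun a =>
    le_trans (abs_nonneg _) (hsupb a (Classical.arbitrary _))
  have cross : ∀ x ∈ T, ∀ y ∈ S, x ≤ y := by
    rintro x ⟨w, hw, rfl⟩ y ⟨a, rfl⟩
    have hw2 : ‖w‖ ≤ 1 := le_trans (le_max_left _ _) hw
    have hw1 : ∑ i, |w i| ≤ Real.sqrt k := by
      have := le_trans (le_max_right _ _) hw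
      rwa [div_le_one hsk0] at this
    have e1 : ∑ i, w i * u i = ∑ i, w i * a i + ∑ i, w i * (u i - a i) := by
      rw [← Finset.sum_add_distrib]
      exact Finset.sum_congr rfl fun i _ => by ring
    have e2 : ∑ i, w i * a i ≤ ‖a‖ := by
      have h1 : ∑ i, w i * a i ≤ ‖w‖ * ‖a‖ := by
        have := real_inner_le_norm w a
        simpa [PiLp.inner_apply, RCLike.inner_apply, mul_comm] using this
      calc ∑ i, w i * a i ≤ ‖w‖ * ‖a‖ := h1
        _ ≤ 1 * ‖a‖ := mul_le_mul_of_nonneg_right hw2 (norm_nonneg _)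
        _ = ‖a‖ := one_mul _
    have e3 : ∑ i, w i * (u i - a i) ≤ Real.sqrt k * ⨆ j, |u j - a j| := by
      calc ∑ i, w i * (u i - a i) ≤ ∑ i, |w i| * ⨆ j, |u j - a j| := by
            refine Finset.sum_le_sum fun i _ => ?_
            calc w i * (u i - a i) ≤ |w i * (u i - a i)| := le_abs_self _
              _ = |w i| * |u i - a i| := abs_mul _ _
              _ ≤ |w i| * ⨆ j, |u j - a j| :=
                  mul_le_mul_of_nonneg_left (hsupb a i) (abs_nonneg _)
        _ = (∑ i, |w i|) * ⨆ j, |u j - a j| := by rw [Finset.sum_mul]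
        _ ≤ Real.sqrt k * ⨆ j, |u j - a j| :=
            mul_le_mul_of_nonneg_right hw1 (hsup_nonneg a)
    rw [e1]; exact add_le_add e2 e3
  have hT0 : (0:ℝ) ∈ T := by
    refine ⟨0, ?_, by simp⟩
    have : elNet d k 0 = 0 := by
      simp [elNet]
    rw [this]; norm_num
  have hSne : S.Nonempty := ⟨‖u‖ + Real.sqrt k * ⨆ i, |u i - u i|, u, rfl⟩
  have hbddT : BddAbove T := by
    obtain ⟨y, hy⟩ := hSne
    exact ⟨y, fun x hx => cross x hx y hy⟩
  have hbddS : BddBelow S := ⟨0, fun y hy => cross 0 hT0 y hy⟩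
  apply le_antisymm
  · exact csSup_le ⟨0, hT0⟩ fun x hx => le_csInf hSne fun y hy => cross x hx y hy
  · obtain ⟨w, a, hw, heq⟩ := key d k hk1 hkd u
    calc sInf S ≤ ‖a‖ + Real.sqrt k * ⨆ i, |u i - a i| := csInf_le hbddS ⟨a, rfl⟩
      _ = ∑ i, w i * u i := heq
      _ ≤ sSup T := le_csSup hbddT ⟨w, hw, rfl⟩
end

section
/- Let 1 ≤ k ≤ d be integers and u ∈ ℝ^d. Then for every a ∈ ℝ^d, (∑_{i=1}^k (|u|↓_i)²)^{1/2} ≤ ‖a‖₂ + √k · ‖u − a‖_∞. Consequently the ℓ2 norm of the k largest-magnitude entries of u is a lower bound for the dual elastic-net norm inf_a {‖a‖₂ + √k‖u − a‖_∞}. -/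
/-- for every `a`, `(∑_{i=1}^k (|u|↓ᵢ)²)^½ ≤ ‖a‖₂ + √k·‖u − a‖_∞`;
consequently the ℓ2 norm of the `k` largest-magnitude entries of `u` is a lower
bound for `inf_a {‖a‖₂ + √k‖u − a‖_∞}`. -/
theorem statement5 (d k : ℕ) (hk1 : 1 ≤ k) (hkd : k ≤ d) (u : EuclideanSpace ℝ (Fin d)) :
    (∀ a : EuclideanSpace ℝ (Fin d),
      Real.sqrt (∑ i ∈ Finset.Icc 1 k, zD u i ^ 2)
        ≤ ‖a‖ + Real.sqrt k * ⨆ i, |u i - a i|) ∧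
    Real.sqrt (∑ i ∈ Finset.Icc 1 k, zD u i ^ 2)
      ≤ sInf {x : ℝ | ∃ a : EuclideanSpace ℝ (Fin d),
          x = ‖a‖ + Real.sqrt k * ⨆ i, |u i - a i|} := by
  have hd : 0 < d := by omega
  set σ := Tuple.sort (fun j => |u j|) with hσ
  set f : ℕ → Fin d := fun i =>
    if h : 1 ≤ i ∧ i ≤ d then σ (Fin.rev ⟨i - 1, by omega⟩) else ⟨0, hd⟩ with hf
  have hinj : ∀ x ∈ Finset.Icc 1 k, ∀ y ∈ Finset.Icc 1 k, f x = f y → x = y := by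
    intro x hx y hy hxy
    simp only [Finset.mem_Icc] at hx hy
    have hx' : 1 ≤ x ∧ x ≤ d := ⟨hx.1, hx.2.trans hkd⟩
    have hy' : 1 ≤ y ∧ y ≤ d := ⟨hy.1, hy.2.trans hkd⟩
    simp only [hf, dif_pos hx', dif_pos hy'] at hxy
    have := σ.injective hxy
    have := Fin.rev_injective this
    have : x - 1 = y - 1 := congrArg Fin.val this
    omega
  set T : Finset (Fin d) := (Finset.Icc 1 k).image f with hT
  have hsum : ∑ i ∈ Finset.Icc 1 k, zD u i ^ 2 = ∑ j ∈ T, u j ^ 2 := by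
    rw [hT, Finset.sum_image hinj]
    apply Finset.sum_congr rfl
    intro i hi
    simp only [Finset.mem_Icc] at hi
    have hi' : 1 ≤ i ∧ i ≤ d := ⟨hi.1, hi.2.trans hkd⟩
    rw [show f i = σ (Fin.rev ⟨i - 1, by omega⟩) from dif_pos hi']
    simp only [zD, dif_pos hi', absDown, sq_abs, hσ]
  have hcard : T.card ≤ k := by
    calc T.card ≤ (Finset.Icc 1 k).card := Finset.card_image_le
    _ = k := by simp
  have main : ∀ a : EuclideanSpace ℝ (Fin d),
      Real.sqrt (∑ i ∈ Finset.Icc 1 k, zD u i ^ 2)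
        ≤ ‖a‖ + Real.sqrt k * ⨆ i, |u i - a i| := by
    intro a
    set M : ℝ := ⨆ i, |u i - a i| with hM
    have hbdd : BddAbove (Set.range fun i => |u i - a i|) :=
      Set.Finite.bddAbove (Set.finite_range _)
    have hMi : ∀ i, |u i - a i| ≤ M := fun i => le_ciSup hbdd i
    have hM0 : 0 ≤ M := le_trans (abs_nonneg _) (hMi ⟨0, hd⟩)
    set A : EuclideanSpace ℝ (Fin d) := WithLp.toLp 2 (fun i => if i ∈ T then a i else 0) with hA
    set B : EuclideanSpace ℝ (Fin d) := WithLp.toLp 2 (fun i => if i ∈ T then u i - a i else 0) with hB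
    set U : EuclideanSpace ℝ (Fin d) := WithLp.toLp 2 (fun i => if i ∈ T then u i else 0) with hU
    have hUAB : U = A + B := by
      ext i
      simp only [hU, hA, hB, PiLp.add_apply]
      split <;> ring
    have hUnorm : ‖U‖ = Real.sqrt (∑ j ∈ T, u j ^ 2) := by
      rw [EuclideanSpace.norm_eq]
      congr 1
      rw [← Finset.sum_filter_add_sum_filter_not Finset.univ (· ∈ T)]
      have h1 : ∑ i ∈ Finset.univ.filter (· ∈ T), ‖U i‖ ^ 2 = ∑ j ∈ T, u j ^ 2 := by
        rw [Finset.filter_mem_eq_inter, Finset.univ_inter]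
        apply Finset.sum_congr rfl
        intro i hi
        simp [hU, if_pos hi, sq_abs]
      have h2 : ∑ i ∈ Finset.univ.filter (¬ · ∈ T), ‖U i‖ ^ 2 = 0 := by
        apply Finset.sum_eq_zero
        intro i hi
        simp only [Finset.mem_filter] at hi
        simp [hU, if_neg hi.2]
      rw [h1, h2, add_zero]
    have hAnorm : ‖A‖ ≤ ‖a‖ := by
      rw [EuclideanSpace.norm_eq, EuclideanSpace.norm_eq]
      apply Real.sqrt_le_sqrt
      apply Finset.sum_le_sum
      intro i _
      simp only [hA]
      split
      · exact le_refl _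
      · simpa using sq_nonneg ‖a i‖
    have hBnorm : ‖B‖ ≤ Real.sqrt k * M := by
      rw [EuclideanSpace.norm_eq]
      have hle : ∑ i, ‖B i‖ ^ 2 ≤ (k : ℝ) * M ^ 2 := by
        rw [← Finset.sum_filter_add_sum_filter_not Finset.univ (· ∈ T)]
        have h2 : ∑ i ∈ Finset.univ.filter (¬ · ∈ T), ‖B i‖ ^ 2 = 0 := by
          apply Finset.sum_eq_zero
          intro i hi
          simp only [Finset.mem_filter] at hi
          simp [hB, if_neg hi.2]
        rw [h2, add_zero, Finset.filter_mem_eq_inter, Finset.univ_inter]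
        calc ∑ i ∈ T, ‖B i‖ ^ 2 ≤ ∑ _i ∈ T, M ^ 2 := by
              apply Finset.sum_le_sum
              intro i hi
              simp only [hB, if_pos hi, Real.norm_eq_abs, abs_abs]
              rw [sq_abs, ← sq_abs (u i - a i)]
              exact pow_le_pow_left₀ (abs_nonneg _) (hMi i) 2
          _ = T.card * M ^ 2 := by rw [Finset.sum_const, nsmul_eq_mul]
          _ ≤ (k : ℝ) * M ^ 2 := by
              apply mul_le_mul_of_nonneg_right _ (sq_nonneg M)
              exact_mod_cast hcard
      calc Real.sqrt (∑ i, ‖B i‖ ^ 2) ≤ Real.sqrt ((k : ℝ) * M ^ 2) :=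
            Real.sqrt_le_sqrt hle
        _ = Real.sqrt k * M := by
            rw [Real.sqrt_mul (by positivity), Real.sqrt_sq hM0]
    calc Real.sqrt (∑ i ∈ Finset.Icc 1 k, zD u i ^ 2)
        = ‖U‖ := by rw [hsum, hUnorm]
      _ ≤ ‖A‖ + ‖B‖ := by rw [hUAB]; exact norm_add_le A B
      _ ≤ ‖a‖ + Real.sqrt k * M := add_le_add hAnorm hBnorm
  refine ⟨main, ?_⟩
  refine le_csInf ⟨_, ⟨0, rfl⟩⟩ ?_
  rintro x ⟨a, rfl⟩
  exact main a
end

section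
/- Let 1 ≤ k < d be integers and let u ∈ ℝ^d satisfy u_1 ≥ u_2 ≥ … ≥ u_d ≥ 0. Setting a = (u_1 − u_{k+1}, …, u_k − u_{k+1}, 0, …, 0) ∈ ℝ^d, one has ‖a‖₂ + √k · ‖u − a‖_∞ = ( ∑_{i=1}^k (u_i − u_{k+1})² )^{1/2} + √k · u_{k+1} ≤ √2 · ( ∑_{i=1}^k u_i² )^{1/2}. -/
/-- for `u_1 ≥ … ≥ u_d ≥ 0` (here 0-indexed: `u 0 ≥ … ≥ u (d-1) ≥ 0`)
and `a = (u_1 − u_{k+1}, …, u_k − u_{k+1}, 0, …, 0)`, one has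
`‖a‖₂ + √k·‖u − a‖_∞ = (∑_{i=1}^k (u_i − u_{k+1})²)^½ + √k·u_{k+1}
 ≤ √2·(∑_{i=1}^k u_i²)^½`. -/
theorem statement6 (d k : ℕ) (hk1 : 1 ≤ k) (hkd : k < d)
    (u a : EuclideanSpace ℝ (Fin d))
    (hmono : ∀ i j : Fin d, i ≤ j → u j ≤ u i) (hnn : ∀ i, 0 ≤ u i)
    (ha : ∀ i : Fin d, a i = if (i : ℕ) < k then u i - u ⟨k, hkd⟩ else 0) :
    ‖a‖ + Real.sqrt k * (⨆ i, |u i - a i|)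
      = Real.sqrt (∑ i ∈ Finset.univ.filter fun i : Fin d => (i : ℕ) < k,
            (u i - u ⟨k, hkd⟩) ^ 2)
        + Real.sqrt k * u ⟨k, hkd⟩ ∧
    Real.sqrt (∑ i ∈ Finset.univ.filter fun i : Fin d => (i : ℕ) < k,
            (u i - u ⟨k, hkd⟩) ^ 2)
        + Real.sqrt k * u ⟨k, hkd⟩
      ≤ Real.sqrt 2 *
        Real.sqrt (∑ i ∈ Finset.univ.filter fun i : Fin d => (i : ℕ) < k, u i ^ 2) := by
  set c := u ⟨k, hkd⟩ with hc
  have hc0 : 0 ≤ c := hnn _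
  set S := Finset.univ.filter fun i : Fin d => (i : ℕ) < k with hS
  have hcard : S.card = k := by
    have : S = Finset.Iio (⟨k, hkd⟩ : Fin d) := by
      ext i; simp [hS, Fin.lt_def]
    rw [this, Fin.card_Iio]
  have hnorm : ‖a‖ = Real.sqrt (∑ i ∈ S, (u i - c) ^ 2) := by
    rw [EuclideanSpace.norm_eq]
    congr 1
    rw [Finset.sum_filter]
    apply Finset.sum_congr rfl
    intro i _
    rw [ha i]
    split_ifs with h
    · rw [Real.norm_eq_abs, sq_abs]
    · simp
  have hle : ∀ i, |u i - a i| ≤ c := by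
    intro i
    rw [ha i]
    split_ifs with h
    · simp [abs_of_nonneg hc0]
    · rw [sub_zero, abs_of_nonneg (hnn i)]
      exact hmono ⟨k, hkd⟩ i (by simp [Fin.le_def]; omega)
  have _ : Nonempty (Fin d) := ⟨⟨0, by omega⟩⟩
  have hsup : (⨆ i, |u i - a i|) = c := by
    refine le_antisymm (ciSup_le hle) ?_
    have h0 : (0 : ℕ) < d := by omega
    have := le_ciSup (f := fun i => |u i - a i|) (Finite.bddAbove_range _)
      (⟨0, h0⟩ : Fin d)
    refine le_trans ?_ this
    rw [ha, if_pos (by simp; omega)]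
    simp [abs_of_nonneg hc0]
  constructor
  · rw [hnorm, hsup]
  · -- the inequality
    have hXY : ∑ i ∈ S, (u i - c) ^ 2 + (k : ℝ) * c ^ 2 ≤ ∑ i ∈ S, u i ^ 2 := by
      have : (k : ℝ) * c ^ 2 = ∑ _i ∈ S, c ^ 2 := by
        rw [Finset.sum_const, hcard, nsmul_eq_mul]
      rw [this, ← Finset.sum_add_distrib]
      apply Finset.sum_le_sum
      intro i hi
      have hik : (i : ℕ) < k := by simpa [hS] using hi
      have : c ≤ u i := hmono i ⟨k, hkd⟩ (by simp [Fin.le_def]; omega)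
      nlinarith
    set X := ∑ i ∈ S, (u i - c) ^ 2 with hX
    set Z := ∑ i ∈ S, u i ^ 2 with hZ
    have hX0 : 0 ≤ X := Finset.sum_nonneg fun i _ => sq_nonneg _
    have hZ0 : 0 ≤ Z := Finset.sum_nonneg fun i _ => sq_nonneg _
    have hY0 : 0 ≤ (k : ℝ) * c ^ 2 := by positivity
    have hsqY : Real.sqrt k * c = Real.sqrt ((k : ℝ) * c ^ 2) := by
      rw [Real.sqrt_mul (by positivity), Real.sqrt_sq hc0]
    rw [hsqY]
    set Y := (k : ℝ) * c ^ 2 with hY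
    have key : Real.sqrt X + Real.sqrt Y ≤ Real.sqrt 2 * Real.sqrt (X + Y) := by
      rw [← Real.sqrt_mul (by norm_num)]
      apply Real.le_sqrt_of_sq_le
      nlinarith [Real.sq_sqrt hX0, Real.sq_sqrt hY0,
        sq_nonneg (Real.sqrt X - Real.sqrt Y), Real.sqrt_nonneg X, Real.sqrt_nonneg Y]
    refine key.trans ?_
    exact mul_le_mul_of_nonneg_left (Real.sqrt_le_sqrt (by linarith)) (Real.sqrt_nonneg 2)
end

section
/- Let 1 ≤ k ≤ d be integers and u ∈ ℝ^d with u ≠ 0. Then inf{ ‖a‖₂ + √k · ‖u − a‖_∞ : a ∈ ℝ^d } < √2 · ( ∑_{i=1}^k (|u|↓_i)² )^{1/2}, i.e. the dual elastic-net norm of u is strictly less than √2 times the ℓ2 norm of the k largest-magnitude entries of u. -/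
set_option maxHeartbeats 1000000 in
/-- for `u ≠ 0`, the dual elastic-net norm
`inf{‖a‖₂ + √k·‖u − a‖_∞ : a}` is strictly less than `√2` times the ℓ2 norm of
the `k` largest-magnitude entries of `u`. -/
theorem statement7 (d k : ℕ) (hk1 : 1 ≤ k) (hkd : k ≤ d)
    (u : EuclideanSpace ℝ (Fin d)) (hu : u ≠ 0) :
    sInf {x : ℝ | ∃ a : EuclideanSpace ℝ (Fin d),
        x = ‖a‖ + Real.sqrt k * ⨆ i, |u i - a i|}
      < Real.sqrt 2 * Real.sqrt (∑ i ∈ Finset.Icc 1 k, zD u i ^ 2) := by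
  classical
  have hd : 1 ≤ d := hk1.trans hkd
  have hne : Nonempty (Fin d) := ⟨⟨0, by omega⟩⟩
  set σ := Tuple.sort (fun j : Fin d => |u j|) with hσ
  set g : Fin d → ℝ := (fun j : Fin d => |u j|) ∘ σ with hg
  have hgmono : Monotone g := Tuple.monotone_sort _
  have hg0 : ∀ j, 0 ≤ g j := fun j => abs_nonneg _
  have hdk : d - k < d := by omega
  set m : Fin d := ⟨d - k, hdk⟩ with hm
  set t : ℝ := g m with ht
  have ht0 : 0 ≤ t := hg0 m
  -- zD in terms of g
  have hzD : ∀ (i : ℕ) (_ : 1 ≤ i) (_ : i ≤ d), zD u i = g ⟨d - i, by omega⟩ := by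
    intro i h1 h2
    rw [zD, dif_pos ⟨h1, h2⟩, absDown]
    have hrev : (⟨i - 1, by omega⟩ : Fin d).rev = ⟨d - i, by omega⟩ := by
      apply Fin.ext; simp [Fin.val_rev]; omega
    rw [hrev, hg, hσ]; rfl
  -- the k-largest sum B
  set B : ℝ := ∑ j ∈ Finset.Ici m, g j ^ 2 with hB
  have hsumB : (∑ i ∈ Finset.Icc 1 k, zD u i ^ 2) = B := by
    rw [hB]
    refine (Finset.sum_bij (fun (j : Fin d) _ => d - j.val) ?_ ?_ ?_ ?_).symm
    · intro j hj
      have hj2 : d - k ≤ j.val := by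
        have := Finset.mem_Ici.mp hj
        rw [Fin.le_def] at this
        simpa [hm] using this
      have := j.isLt
      simp only [Finset.mem_Icc]
      omega
    · intro j1 h1 j2 h2 h
      have hj1 := j1.isLt; have hj2 := j2.isLt
      have hm1 : d - k ≤ j1.val := by
        have := Finset.mem_Ici.mp h1; rw [Fin.le_def] at this; simpa [hm] using this
      have hm2 : d - k ≤ j2.val := by
        have := Finset.mem_Ici.mp h2; rw [Fin.le_def] at this; simpa [hm] using this
      try simp only at h
      apply Fin.ext; omega
    · intro i hi
      rw [Finset.mem_Icc] at hi
      refine ⟨⟨d - i, by omega⟩, Finset.mem_Ici.mpr ?_, by simp only; omega⟩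
      rw [Fin.le_def]; simp [hm]; omega
    · intro j hj
      have hj2 : d - k ≤ j.val := by
        have := Finset.mem_Ici.mp hj; rw [Fin.le_def] at this; simpa [hm] using this
      have hjlt := j.isLt
      have h1 : 1 ≤ d - j.val := by omega
      have h2 : d - j.val ≤ d := by omega
      simp only
      rw [hzD _ h1 h2]
      have : (⟨d - (d - j.val), by omega⟩ : Fin d) = j := by
        apply Fin.ext; simp; omega
      rw [this]
  -- the soft-thresholded vector a
  set a : EuclideanSpace ℝ (Fin d) := WithLp.toLp 2 (fun j => u j - max (-t) (min t (u j))) with ha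
  have habs : ∀ j, |a j| = max (|u j| - t) 0 := by
    intro j
    show |u j - max (-t) (min t (u j))| = _
    rcases le_total 0 (u j) with h | h
    · rcases le_total (u j) t with h2 | h2
      · rw [min_eq_right h2, max_eq_right (by linarith), abs_of_nonneg h,
          max_eq_right (by linarith)]
        simp
      · rw [min_eq_left h2, max_eq_right (by linarith), abs_of_nonneg h,
          max_eq_left (by linarith), abs_of_nonneg (by linarith)]
    · rcases le_total (-t) (u j) with h2 | h2
      · rw [min_eq_right (by linarith), max_eq_right h2, abs_of_nonpos h,
          max_eq_right (by linarith)]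
        simp
      · rw [min_eq_right (by linarith), max_eq_left h2, abs_of_nonpos h,
          max_eq_left (by linarith)]
        ring_nf
        rw [abs_of_nonpos (by linarith)]
        ring
  have hdev : ∀ j, |u j - a j| ≤ t := by
    intro j
    show |u j - (u j - max (-t) (min t (u j)))| ≤ t
    rw [abs_le]
    constructor
    · have : -t ≤ max (-t) (min t (u j)) := le_max_left _ _
      linarith [this]
    · have : max (-t) (min t (u j)) ≤ t :=
        max_le (by linarith) (min_le_left _ _)
      linarith [this]
  -- norm of a
  set A : ℝ := ∑ j ∈ Finset.Ici m, (g j - t) ^ 2 with hA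
  have hA0 : 0 ≤ A := Finset.sum_nonneg fun j _ => sq_nonneg _
  have hnorma : ‖a‖ = Real.sqrt A := by
    rw [EuclideanSpace.norm_eq]
    congr 1
    have e1 : ∀ j : Fin d, ‖a j‖ ^ 2 = max (|u j| - t) 0 ^ 2 := by
      intro j; rw [Real.norm_eq_abs, habs]
    rw [Finset.sum_congr rfl fun j _ => e1 j]
    have e2 : (∑ j, max (|u j| - t) 0 ^ 2) = ∑ j, max (g j - t) 0 ^ 2 := by
      simp only [hg, Function.comp_apply]
      exact (Equiv.sum_comp σ (fun j => max (|u j| - t) 0 ^ 2)).symm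
    rw [e2, hA]
    rw [← Finset.sum_subset (Finset.subset_univ (Finset.Ici m))]
    · refine Finset.sum_congr rfl fun j hj => ?_
      have : t ≤ g j := hgmono (Finset.mem_Ici.mp hj)
      rw [max_eq_left (by linarith)]
    · intro j _ hj
      have hjm : j < m := by
        by_contra hc
        exact hj (Finset.mem_Ici.mpr (le_of_not_gt hc))
      have : g j ≤ t := hgmono hjm.le
      rw [max_eq_right (by linarith)]
      simp
  -- card of Ici m
  have hcard : (Finset.Ici m).card = k := by
    rw [Fin.card_Ici]
    simp only [hm]
    omega
  -- key inequality: A + k t^2 ≤ B, strict under side conditions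
  have hterm : ∀ j ∈ Finset.Ici m, (g j - t) ^ 2 + t ^ 2 ≤ g j ^ 2 := by
    intro j hj
    have : t ≤ g j := hgmono (Finset.mem_Ici.mp hj)
    nlinarith [ht0]
  have hAB : A + k * t ^ 2 ≤ B := by
    have := Finset.sum_le_sum hterm
    rw [Finset.sum_add_distrib, Finset.sum_const, hcard, nsmul_eq_mul] at this
    exact this
  -- positivity of B
  have hu0 : 0 < ‖u‖ := norm_pos_iff.mpr hu
  -- main bound on witness
  set w : ℝ := ‖a‖ + Real.sqrt k * t with hw
  have hsa : Real.sqrt A ^ 2 = A := Real.sq_sqrt hA0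
  have hsk : Real.sqrt k ^ 2 = (k : ℝ) := Real.sq_sqrt (Nat.cast_nonneg k)
  have hsa0 : 0 ≤ Real.sqrt A := Real.sqrt_nonneg _
  have hsk0 : 0 ≤ Real.sqrt k := Real.sqrt_nonneg _
  have hwlt : w ^ 2 < 2 * B := by
    rcases eq_or_lt_of_le ht0 with ht0' | htpos
    · -- t = 0 : a = u, A = ‖u‖² > 0
      have hAu : ‖a‖ = ‖u‖ := by
        rw [hnorma, EuclideanSpace.norm_eq]
        congr 1
        have : (∑ i, ‖u i‖ ^ 2) = ∑ j, max (|u j| - t) 0 ^ 2 := by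
          refine Finset.sum_congr rfl fun j _ => ?_
          rw [← ht0', Real.norm_eq_abs, sub_zero, max_eq_left (abs_nonneg _)]
        have e2 : (∑ j, max (|u j| - t) 0 ^ 2) = ∑ j, max (g j - t) 0 ^ 2 := by
          simp only [hg, Function.comp_apply]
          exact (Equiv.sum_comp σ (fun j => max (|u j| - t) 0 ^ 2)).symm
        rw [this, e2]
        rw [← Finset.sum_subset (Finset.subset_univ (Finset.Ici m))]
        · refine (Finset.sum_congr rfl fun j hj => ?_)
          have : t ≤ g j := hgmono (Finset.mem_Ici.mp hj)
          rw [max_eq_left (by linarith)]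
        · intro j _ hj
          have hjm : j < m := by
            by_contra hc
            exact hj (Finset.mem_Ici.mpr (le_of_not_gt hc))
          have h1 : g j ≤ t := hgmono hjm.le
          rw [max_eq_right (by linarith)]
          simp
      have hApos : 0 < A := by
        have : ‖a‖ ^ 2 = A := by rw [hnorma, hsa]
        rw [hAu] at this
        nlinarith
      have hAB' : A ≤ B := by nlinarith [hAB]
      rw [hw, ← ht0']
      rw [hnorma]
      nlinarith
    · -- t > 0
      rcases eq_or_ne A (k * t ^ 2) with hAe | hAne
      · -- need strict hAB : some g j > t
        have hex : ∃ j ∈ Finset.Ici m, t < g j := by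
          by_contra hc
          push_neg at hc
          have hAzero : A = 0 := by
            rw [hA]
            refine Finset.sum_eq_zero fun j hj => ?_
            have h1 : t ≤ g j := hgmono (Finset.mem_Ici.mp hj)
            have h2 : g j ≤ t := hc j hj
            have : g j = t := le_antisymm h2 h1
            rw [this]; ring
          rw [hAzero] at hAe
          have : 0 < k * t ^ 2 := by positivity
          linarith [hAe ▸ this]
        obtain ⟨j0, hj0, hj0t⟩ := hex
        have hABs : A + k * t ^ 2 < B := by
          have hs : (∑ j ∈ Finset.Ici m, ((g j - t) ^ 2 + t ^ 2)) <
              ∑ j ∈ Finset.Ici m, g j ^ 2 := by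
            refine Finset.sum_lt_sum hterm ⟨j0, hj0, ?_⟩
            nlinarith
          rw [Finset.sum_add_distrib, Finset.sum_const, hcard, nsmul_eq_mul] at hs
          exact hs
        rw [hw, hnorma]
        nlinarith [sq_nonneg (Real.sqrt A - Real.sqrt k * t), mul_nonneg hsk0 ht0]
      · -- A ≠ k t² : strict AM-GM
        have hne' : Real.sqrt A ≠ Real.sqrt k * t := by
          intro he
          apply hAne
          have := congrArg (fun x => x ^ 2) he
          try simp only at this
          rw [hsa, mul_pow, hsk] at this
          exact this
        have hsq : 0 < (Real.sqrt A - Real.sqrt k * t) ^ 2 := by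
          have : Real.sqrt A - Real.sqrt k * t ≠ 0 := sub_ne_zero_of_ne hne'
          positivity
        rw [hw, hnorma]
        nlinarith
  have hB0 : 0 ≤ B := Finset.sum_nonneg fun j _ => sq_nonneg _
  have hw0 : 0 ≤ w := add_nonneg (norm_nonneg _) (mul_nonneg hsk0 ht0)
  have hwfin : w < Real.sqrt 2 * Real.sqrt B := by
    rw [← Real.sqrt_mul (by norm_num : (0:ℝ) ≤ 2)]
    exact (Real.lt_sqrt hw0).mpr hwlt
  -- conclude via sInf
  have hbdd : BddBelow {x : ℝ | ∃ a : EuclideanSpace ℝ (Fin d),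
      x = ‖a‖ + Real.sqrt k * ⨆ i, |u i - a i|} := by
    refine ⟨0, fun x hx => ?_⟩
    obtain ⟨b, rfl⟩ := hx
    have hsup0 : 0 ≤ ⨆ i, |u i - b i| := by
      have := le_ciSup (f := fun i => |u i - b i|)
        (Set.Finite.bddAbove (Set.finite_range _)) ⟨0, by omega⟩
      exact le_trans (abs_nonneg _) this
    exact add_nonneg (norm_nonneg _) (mul_nonneg hsk0 hsup0)
  have hmem : (‖a‖ + Real.sqrt k * ⨆ i, |u i - a i|) ∈ {x : ℝ | ∃ a : EuclideanSpace ℝ (Fin d),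
      x = ‖a‖ + Real.sqrt k * ⨆ i, |u i - a i|} := ⟨a, rfl⟩
  have hsup : (⨆ i, |u i - a i|) ≤ t := ciSup_le hdev
  calc sInf {x : ℝ | ∃ a : EuclideanSpace ℝ (Fin d),
        x = ‖a‖ + Real.sqrt k * ⨆ i, |u i - a i|}
      ≤ ‖a‖ + Real.sqrt k * ⨆ i, |u i - a i| := csInf_le hbdd hmem
    _ ≤ w := by
        rw [hw]
        have := mul_le_mul_of_nonneg_left hsup hsk0
        linarith
    _ < Real.sqrt 2 * Real.sqrt B := hwfin
    _ = Real.sqrt 2 * Real.sqrt (∑ i ∈ Finset.Icc 1 k, zD u i ^ 2) := by rw [hsumB]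
end

section
/- Let k ≥ 2 be an integer, d = 1 + k², and w = (k^{3/2}, 1, 1, …, 1) ∈ ℝ^d (one entry equal to k^{3/2} followed by k² entries equal to 1). Then ‖w‖_k^el = k^{3/2}·(1 + 1/√k) and ‖w‖_k^sp > √2 · k^{3/2}; in particular ‖w‖_k^sp / ‖w‖_k^el > √2 / (1 + k^{−1/2}), so the ratio between the k-support norm and the elastic-net norm can be made arbitrarily close to √2. -/
open Pointwise in
set_option maxHeartbeats 2000000 in
/-- for `k ≥ 2`, `d = 1 + k²` and
`w = (k^{3/2}, 1, …, 1)` (note `k^{3/2} = k·√k`), one has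
`‖w‖ₖᵉˡ = k^{3/2}(1 + 1/√k)`, `‖w‖ₖˢᵖ > √2·k^{3/2}`, and hence
`‖w‖ₖˢᵖ / ‖w‖ₖᵉˡ > √2 / (1 + k^{-1/2})`. -/
theorem statement8 (k : ℕ) (hk : 2 ≤ k) (w : EuclideanSpace ℝ (Fin (1 + k ^ 2)))
    (hw0 : w ⟨0, by positivity⟩ = (k : ℝ) * Real.sqrt k)
    (hw1 : ∀ i : Fin (1 + k ^ 2), i ≠ ⟨0, by positivity⟩ → w i = 1) :
    elNet (1 + k ^ 2) k w = (k : ℝ) * Real.sqrt k * (1 + 1 / Real.sqrt k) ∧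
    Real.sqrt 2 * ((k : ℝ) * Real.sqrt k) < kSupNorm (1 + k ^ 2) k w ∧
    Real.sqrt 2 / (1 + 1 / Real.sqrt k)
      < kSupNorm (1 + k ^ 2) k w / elNet (1 + k ^ 2) k w := by
  have hk0 : (0:ℝ) < k := by exact_mod_cast lt_of_lt_of_le two_pos hk
  set sk : ℝ := Real.sqrt k with hsk
  have hsk0 : 0 < sk := Real.sqrt_pos.mpr hk0
  have hsk2 : sk ^ 2 = k := Real.sq_sqrt hk0.le
  set i0 : Fin (1 + k ^ 2) := ⟨0, by positivity⟩ with hi0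
  have hsum : ∀ f : Fin (1 + k ^ 2) → ℝ,
      ∑ i, f i = f i0 + ∑ i ∈ Finset.univ.erase i0, f i :=
    fun f => (Finset.add_sum_erase _ f (Finset.mem_univ i0)).symm
  have hcard : (Finset.univ.erase i0).card = k ^ 2 := by
    rw [Finset.card_erase_of_mem (Finset.mem_univ i0)]
    simp
  have hwpos : ∀ i, 0 ≤ w i := by
    intro i
    by_cases h : i = i0
    · rw [h, hw0]; positivity
    · rw [hw1 i h]; norm_num
  have hL1 : ∑ i, |w i| = k * sk + k ^ 2 := by
    rw [hsum]
    have h1 : |w i0| = k * sk := by rw [hw0]; exact abs_of_nonneg (by positivity)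
    have h2 : ∑ i ∈ Finset.univ.erase i0, |w i| = (k ^ 2 : ℝ) := by
      calc ∑ i ∈ Finset.univ.erase i0, |w i| = ∑ _i ∈ Finset.univ.erase i0, (1:ℝ) :=
            Finset.sum_congr rfl (fun i hi => by
              rw [hw1 i (Finset.ne_of_mem_erase hi)]; exact abs_one)
        _ = (k ^ 2 : ℝ) := by rw [Finset.sum_const, hcard]; simp
    rw [h1, h2]
  have hnorm : ‖w‖ = Real.sqrt ((k:ℝ) ^ 3 + k ^ 2) := by
    rw [EuclideanSpace.norm_eq]
    congr 1
    rw [hsum]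
    have h1 : ‖w i0‖ ^ 2 = (k:ℝ) ^ 3 := by
      rw [hw0, Real.norm_eq_abs, sq_abs]
      nlinarith [hsk2]
    have h2 : ∑ i ∈ Finset.univ.erase i0, ‖w i‖ ^ 2 = (k ^ 2 : ℝ) := by
      calc ∑ i ∈ Finset.univ.erase i0, ‖w i‖ ^ 2 = ∑ _i ∈ Finset.univ.erase i0, (1:ℝ) :=
            Finset.sum_congr rfl (fun i hi => by
              rw [hw1 i (Finset.ne_of_mem_erase hi)]; norm_num)
        _ = (k ^ 2 : ℝ) := by rw [Finset.sum_const, hcard]; simp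
    rw [h1, h2]
  have helnet : elNet (1 + k ^ 2) k w = k * sk + k := by
    unfold elNet
    rw [hL1, hnorm, ← hsk]
    have hdiv : ((k:ℝ) * sk + k ^ 2) / sk = k * sk + k := by
      field_simp
      nlinarith [hsk2]
    rw [hdiv, max_eq_right]
    have h1 : (k:ℝ) ^ 3 + k ^ 2 ≤ ((k:ℝ) * sk + k) ^ 2 := by nlinarith [hsk2, hsk0, hk0]
    calc Real.sqrt ((k:ℝ) ^ 3 + k ^ 2) ≤ Real.sqrt (((k:ℝ) * sk + k) ^ 2) :=
          Real.sqrt_le_sqrt h1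
      _ = (k:ℝ) * sk + k := Real.sqrt_sq (by positivity)
  have hel_eq : (k:ℝ) * sk * (1 + 1 / sk) = k * sk + k := by
    field_simp
  set u : Fin (1 + k ^ 2) → ℝ := fun i => if i = i0 then sk else 1 with hu
  set M : ℝ := Real.sqrt (2 * k - 1) with hM
  have hk2 : (2:ℝ) ≤ k := by exact_mod_cast hk
  have h2k1 : (0:ℝ) < 2 * k - 1 := by linarith
  have hM0 : 0 < M := Real.sqrt_pos.mpr h2k1
  have hM2 : M ^ 2 = 2 * k - 1 := Real.sq_sqrt h2k1.le
  have hubound : ∀ v ∈ kSupBall (1 + k ^ 2) k, ∑ i, u i * v i ≤ M := by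
    intro v hv
    have hconv : Convex ℝ {v : EuclideanSpace ℝ (Fin (1 + k ^ 2)) | ∑ i, u i * v i ≤ M} := by
      apply convex_halfSpace_le
      constructor
      · intro a b
        show ∑ i, u i * (a + b) i = (∑ i, u i * a i) + ∑ i, u i * b i
        rw [← Finset.sum_add_distrib]
        exact Finset.sum_congr rfl (fun i _ => by
          simp only [PiLp.add_apply]; ring)
      · intro c a
        show ∑ i, u i * (c • a) i = c • ∑ i, u i * a i
        rw [smul_eq_mul, Finset.mul_sum]
        exact Finset.sum_congr rfl (fun i _ => by
          simp only [PiLp.smul_apply, smul_eq_mul]; ring)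
    have hsub : {v : EuclideanSpace ℝ (Fin (1 + k ^ 2)) |
        (Finset.univ.filter fun i => v i ≠ 0).card ≤ k ∧ ‖v‖ ≤ 1} ⊆
        {v | ∑ i, u i * v i ≤ M} := by
      rintro v ⟨hvcard, hvnorm⟩
      set T := Finset.univ.filter fun i => v i ≠ 0 with hT
      have hrestrict : ∑ i, u i * v i = ∑ i ∈ T, u i * v i := by
        symm
        apply Finset.sum_subset (Finset.subset_univ T)
        intro i _ hi
        have : v i = 0 := by
          by_contra h
          exact hi (Finset.mem_filter.mpr ⟨Finset.mem_univ i, h⟩)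
        rw [this, mul_zero]
      have hu2 : ∑ i ∈ T, u i ^ 2 ≤ 2 * (k:ℝ) - 1 := by
        by_cases h0 : i0 ∈ T
        · rw [← Finset.add_sum_erase _ _ h0]
          have hui0 : u i0 ^ 2 = (k:ℝ) := by simp [hu, hsk2]
          have hrest : ∑ i ∈ T.erase i0, u i ^ 2 = ((T.erase i0).card : ℝ) := by
            calc ∑ i ∈ T.erase i0, u i ^ 2 = ∑ _i ∈ T.erase i0, (1:ℝ) :=
                  Finset.sum_congr rfl (fun i hi => by
                    simp [hu, Finset.ne_of_mem_erase hi])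
              _ = ((T.erase i0).card : ℝ) := by rw [Finset.sum_const]; simp
          have hcle : ((T.erase i0).card : ℝ) ≤ (k:ℝ) - 1 := by
            have h1 : (T.erase i0).card = T.card - 1 :=
              Finset.card_erase_of_mem h0
            have h3 : (T.erase i0).card ≤ k - 1 := by omega
            have h4 : ((T.erase i0).card : ℝ) ≤ ((k - 1 : ℕ) : ℝ) := by
              exact_mod_cast h3
            calc ((T.erase i0).card : ℝ) ≤ ((k - 1 : ℕ) : ℝ) := h4
              _ ≤ (k:ℝ) - 1 := by
                  rw [Nat.cast_sub (by omega)]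
                  norm_num
          rw [hui0, hrest]
          linarith
        · have hall : ∑ i ∈ T, u i ^ 2 = (T.card : ℝ) := by
            calc ∑ i ∈ T, u i ^ 2 = ∑ _i ∈ T, (1:ℝ) :=
                  Finset.sum_congr rfl (fun i hi => by
                    have hne : i ≠ i0 := fun h => h0 (h ▸ hi)
                    simp [hu, hne])
              _ = (T.card : ℝ) := by rw [Finset.sum_const]; simp
          rw [hall]
          have : (T.card : ℝ) ≤ (k:ℝ) := by exact_mod_cast hvcard
          linarith
      have hv2 : ∑ i ∈ T, v i ^ 2 ≤ 1 := by
        have h1 : ∑ i ∈ T, v i ^ 2 ≤ ∑ i, v i ^ 2 :=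
          Finset.sum_le_sum_of_subset_of_nonneg (Finset.subset_univ T)
            (fun i _ _ => sq_nonneg _)
        have h2 : ∑ i, v i ^ 2 = ‖v‖ ^ 2 := by
          rw [EuclideanSpace.norm_eq, Real.sq_sqrt (by positivity)]
          exact Finset.sum_congr rfl (fun i _ => by rw [Real.norm_eq_abs, sq_abs])
        have h3 : ‖v‖ ^ 2 ≤ 1 := by nlinarith [norm_nonneg v]
        linarith
      have hcs : (∑ i ∈ T, u i * v i) ^ 2 ≤ 2 * (k:ℝ) - 1 := by
        calc (∑ i ∈ T, u i * v i) ^ 2 ≤ (∑ i ∈ T, u i ^ 2) * ∑ i ∈ T, v i ^ 2 :=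
              Finset.sum_mul_sq_le_sq_mul_sq T u v
          _ ≤ (2 * (k:ℝ) - 1) * 1 := by
              apply mul_le_mul hu2 hv2 (Finset.sum_nonneg (fun i _ => sq_nonneg _))
              linarith
          _ = 2 * (k:ℝ) - 1 := mul_one _
      rw [Set.mem_setOf_eq, hrestrict]
      calc ∑ i ∈ T, u i * v i ≤ |∑ i ∈ T, u i * v i| := le_abs_self _
        _ = Real.sqrt ((∑ i ∈ T, u i * v i) ^ 2) := (Real.sqrt_sq_eq_abs _).symm
        _ ≤ Real.sqrt (2 * k - 1) := Real.sqrt_le_sqrt hcs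
    exact convexHull_min hsub hconv hv
  have hinner_w : ∑ i, u i * w i = 2 * (k:ℝ) ^ 2 := by
    rw [hsum]
    have h1 : u i0 * w i0 = (k:ℝ) ^ 2 := by
      have hui0 : u i0 = sk := by simp [hu]
      rw [hw0, hui0]
      nlinarith [hsk2]
    have h2 : ∑ i ∈ Finset.univ.erase i0, u i * w i = (k:ℝ) ^ 2 := by
      calc ∑ i ∈ Finset.univ.erase i0, u i * w i = ∑ _i ∈ Finset.univ.erase i0, (1:ℝ) :=
            Finset.sum_congr rfl (fun i hi => by
              rw [hw1 i (Finset.ne_of_mem_erase hi)]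
              simp [hu, Finset.ne_of_mem_erase hi])
        _ = (k:ℝ) ^ 2 := by rw [Finset.sum_const, hcard]; simp
    rw [h1, h2]
    ring
  have hL1pos : (0:ℝ) < k * sk + k ^ 2 := by positivity
  have hsingle_mem : ∀ i : Fin (1 + k ^ 2), (EuclideanSpace.single i (1:ℝ)) ∈
      {v : EuclideanSpace ℝ (Fin (1 + k ^ 2)) |
        (Finset.univ.filter fun j => v j ≠ 0).card ≤ k ∧ ‖v‖ ≤ 1} := by
    intro i
    constructor
    · have heq : (Finset.univ.filter fun j => EuclideanSpace.single i (1:ℝ) j ≠ 0) = {i} := by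
        ext j
        simp [EuclideanSpace.single_apply]
      rw [heq]
      simpa using (by omega : 1 ≤ k)
    · rw [EuclideanSpace.norm_single]
      norm_num
  have hmem : w ∈ ((k:ℝ) * sk + k ^ 2) • kSupBall (1 + k ^ 2) k := by
    rw [Set.mem_smul_set_iff_inv_smul_mem₀ hL1pos.ne']
    have hsum1 : ∑ i, w i = k * sk + k ^ 2 := by
      rw [← hL1]
      exact Finset.sum_congr rfl (fun i _ => (abs_of_nonneg (hwpos i)).symm)
    have hcm := Finset.centerMass_mem_convexHull (t := Finset.univ)
      (w := fun i => w i) (z := fun i => EuclideanSpace.single i (1:ℝ))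
      (fun i _ => hwpos i) (by rw [hsum1]; exact hL1pos)
      (fun i _ => hsingle_mem i)
    have hcm_eq : Finset.univ.centerMass (fun i => w i)
        (fun i => EuclideanSpace.single i (1:ℝ)) = ((k:ℝ) * sk + k ^ 2)⁻¹ • w := by
      rw [Finset.centerMass, hsum1]
      congr 1
      ext j
      rw [WithLp.ofLp_sum, Finset.sum_apply]
      simp only [PiLp.smul_apply, EuclideanSpace.single_apply, smul_eq_mul,
        mul_ite, mul_one, mul_zero]
      simp
    rw [← hcm_eq]
    exact hcm
  have hgauge : 2 * (k:ℝ) ^ 2 / M ≤ kSupNorm (1 + k ^ 2) k w := by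
    unfold kSupNorm gauge
    refine le_csInf ⟨(k:ℝ) * sk + k ^ 2, hL1pos, hmem⟩ ?_
    rintro r ⟨hr, hrmem⟩
    obtain ⟨v, hvC, hvw⟩ := Set.mem_smul_set.mp hrmem
    rw [div_le_iff₀ hM0]
    have h1 : ∑ i, u i * w i = r * ∑ i, u i * v i := by
      rw [← hvw, Finset.mul_sum]
      exact Finset.sum_congr rfl (fun i _ => by
        simp only [PiLp.smul_apply, smul_eq_mul]; ring)
    have h2 := hubound v hvC
    calc 2 * (k:ℝ) ^ 2 = r * ∑ i, u i * v i := by rw [← h1, hinner_w]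
      _ ≤ r * M := mul_le_mul_of_nonneg_left h2 hr.le
  have hgt : Real.sqrt 2 * ((k:ℝ) * sk) < 2 * (k:ℝ) ^ 2 / M := by
    rw [lt_div_iff₀ hM0]
    have hs2 : (0:ℝ) < Real.sqrt 2 := Real.sqrt_pos.mpr (by norm_num)
    have key : (Real.sqrt 2 * ((k:ℝ) * sk) * M) ^ 2 < (2 * (k:ℝ) ^ 2) ^ 2 := by
      have e1 : (Real.sqrt 2 * ((k:ℝ) * sk) * M) ^ 2
          = 2 * ((k:ℝ) ^ 2 * k) * (2 * k - 1) := by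
        rw [mul_pow, mul_pow, mul_pow, Real.sq_sqrt (by norm_num : (0:ℝ) ≤ 2),
          hsk2, hM2]
        try ring
      rw [e1]
      nlinarith [hk0, hk2]
    nlinarith [key, mul_pos (mul_pos hs2 (mul_pos hk0 hsk0)) hM0,
      sq_nonneg (Real.sqrt 2 * ((k:ℝ) * sk) * M - 2 * (k:ℝ) ^ 2)]
  have hksup : Real.sqrt 2 * ((k:ℝ) * sk) < kSupNorm (1 + k ^ 2) k w :=
    lt_of_lt_of_le hgt hgauge
  refine ⟨by rw [helnet, hel_eq], hksup, ?_⟩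
  rw [helnet]
  have helpos : (0:ℝ) < k * sk + k := by positivity
  have hne1 : sk ≠ 0 := hsk0.ne'
  have hne2 : (1:ℝ) + 1 / sk ≠ 0 := by positivity
  have hne3 : (k:ℝ) * sk + k ≠ 0 := helpos.ne'
  have heq : Real.sqrt 2 / (1 + 1 / sk) = Real.sqrt 2 * ((k:ℝ) * sk) / (k * sk + k) := by
    field_simp
  rw [heq]
  exact (div_lt_div_iff_of_pos_right helpos).mpr hksup
end

section
/- For every integer 1 ≤ k ≤ d and every w ∈ ℝ^d, the k-support norm admits the variational characterization ‖w‖_k^sp = min{ ∑_{I ∈ G_k} ‖v_I‖₂ : each v_I ∈ ℝ^d has support contained in I, and ∑_{I ∈ G_k} v_I = w }, where G_k is the collection of all subsets of {1, …, d} of cardinality at most k. -/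
open Pointwise

section Aux

variable {d k : ℕ}

/-- If `w` has a decomposition of total norm `x > 0`, then `w ∈ x • kSupBall`. -/
lemma decomp_mem_smul (w : EuclideanSpace ℝ (Fin d))
    (v : Finset (Fin d) → EuclideanSpace ℝ (Fin d))
    (hsupp : ∀ I : Finset (Fin d), I.card ≤ k → ∀ i, v I i ≠ 0 → i ∈ I)
    (hsum : (∑ I ∈ Finset.univ.filter fun I : Finset (Fin d) => I.card ≤ k, v I) = w)
    (hx : 0 < ∑ I ∈ Finset.univ.filter fun I : Finset (Fin d) => I.card ≤ k, ‖v I‖) :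
    w ∈ (∑ I ∈ Finset.univ.filter fun I : Finset (Fin d) => I.card ≤ k, ‖v I‖) •
      kSupBall d k := by
  classical
  set G : Finset (Finset (Fin d)) := Finset.univ.filter fun I : Finset (Fin d) => I.card ≤ k
    with hG
  set x : ℝ := ∑ I ∈ G, ‖v I‖ with hxdef
  set z : Finset (Fin d) → EuclideanSpace ℝ (Fin d) := fun I => ‖v I‖⁻¹ • v I with hz
  have hzS : ∀ I ∈ G, z I ∈ {u : EuclideanSpace ℝ (Fin d) |
      (Finset.univ.filter fun i => u i ≠ 0).card ≤ k ∧ ‖u‖ ≤ 1} := by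
    intro I hI
    have hIk : I.card ≤ k := (Finset.mem_filter.mp hI).2
    constructor
    · refine le_trans (Finset.card_le_card (t := I) ?_) hIk
      intro i hi
      simp only [Finset.mem_filter, Finset.mem_univ, true_and] at hi
      apply hsupp I hIk i
      intro h0
      apply hi
      show ‖v I‖⁻¹ * v I i = 0
      rw [h0, mul_zero]
    · rcases eq_or_ne (v I) 0 with h | h
      · simp [hz, h]
      · have heq : ‖z I‖ = 1 := by
          show ‖‖v I‖⁻¹ • v I‖ = 1
          simp only [norm_smul, norm_inv, norm_norm]
          exact inv_mul_cancel₀ (norm_ne_zero_iff.mpr h)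
        exact heq.le
  have hcm : G.centerMass (fun I => ‖v I‖) z ∈ kSupBall d k :=
    G.centerMass_mem_convexHull (fun I _ => norm_nonneg _) (by rw [← hxdef]; exact hx) hzS
  refine ⟨_, hcm, ?_⟩
  show x • G.centerMass (fun I => ‖v I‖) z = w
  have hcmeq : G.centerMass (fun I => ‖v I‖) z = x⁻¹ • ∑ I ∈ G, ‖v I‖ • z I := rfl
  rw [hcmeq, smul_smul, mul_inv_cancel₀ hx.ne', one_smul, ← hsum]
  refine Finset.sum_congr rfl fun I _ => ?_
  rcases eq_or_ne (v I) 0 with h | h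
  · simp [hz, h]
  · show ‖v I‖ • ‖v I‖⁻¹ • v I = v I
    rw [smul_smul, mul_inv_cancel₀ (norm_ne_zero_iff.mpr h), one_smul]

/-- Lower bound: the gauge is at most the total norm of any decomposition. -/
lemma gauge_le_decomp (w : EuclideanSpace ℝ (Fin d))
    (v : Finset (Fin d) → EuclideanSpace ℝ (Fin d))
    (hsupp : ∀ I : Finset (Fin d), I.card ≤ k → ∀ i, v I i ≠ 0 → i ∈ I)
    (hsum : (∑ I ∈ Finset.univ.filter fun I : Finset (Fin d) => I.card ≤ k, v I) = w) :
    gauge (kSupBall d k) w ≤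
      ∑ I ∈ Finset.univ.filter fun I : Finset (Fin d) => I.card ≤ k, ‖v I‖ := by
  classical
  have hx0 : 0 ≤ ∑ I ∈ Finset.univ.filter fun I : Finset (Fin d) => I.card ≤ k, ‖v I‖ :=
    Finset.sum_nonneg fun I _ => norm_nonneg _
  rcases hx0.eq_or_lt with h | h
  · have hw : w = 0 := by
      rw [← hsum]
      refine Finset.sum_eq_zero fun I hI => ?_
      have := (Finset.sum_eq_zero_iff_of_nonneg fun I _ => norm_nonneg (v I)).mp h.symm I hI
      exact norm_eq_zero.mp this
    rw [hw, gauge_zero]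
    exact hx0
  · exact gauge_le_of_mem hx0 (decomp_mem_smul w v hsupp hsum h)

/-- From membership in `r • kSupBall` one gets a decomposition of total norm at most `r`. -/
lemma exists_decomp_le (w : EuclideanSpace ℝ (Fin d)) (r : ℝ) (hr : 0 ≤ r)
    (hw : w ∈ r • kSupBall d k) :
    ∃ v : Finset (Fin d) → EuclideanSpace ℝ (Fin d),
      (∀ I : Finset (Fin d), I.card ≤ k → ∀ i, v I i ≠ 0 → i ∈ I) ∧
      (∑ I ∈ Finset.univ.filter fun I : Finset (Fin d) => I.card ≤ k, v I) = w ∧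
      (∑ I ∈ Finset.univ.filter fun I : Finset (Fin d) => I.card ≤ k, ‖v I‖) ≤ r := by
  classical
  obtain ⟨b, hb, rfl⟩ := hw
  rw [kSupBall, convexHull_eq] at hb
  obtain ⟨ι, t, wt, z, hw₀, hw₁, hzS, hcm⟩ := hb
  set G : Finset (Finset (Fin d)) := Finset.univ.filter fun I : Finset (Fin d) => I.card ≤ k
    with hG
  set F : ι → Finset (Fin d) := fun j => Finset.univ.filter fun i => z j i ≠ 0 with hF
  have hmaps : ∀ j ∈ t, F j ∈ G := by
    intro j hj
    simp only [hG, Finset.mem_filter, Finset.mem_univ, true_and]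
    exact (hzS j hj).1
  refine ⟨fun I => ∑ j ∈ t.filter fun j => F j = I, (r * wt j) • z j, ?_, ?_, ?_⟩
  · intro I hI i hi
    have hi' : (∑ j ∈ t.filter fun j => F j = I, (r * wt j) • z j) i ≠ 0 := hi
    rw [WithLp.ofLp_sum, Finset.sum_apply] at hi'
    obtain ⟨j, hj, hne⟩ := Finset.exists_ne_zero_of_sum_ne_zero hi'
    have hji : z j i ≠ 0 := by
      intro h0
      apply hne
      show (r * wt j) * z j i = 0
      rw [h0, mul_zero]
    have hFj : F j = I := (Finset.mem_filter.mp hj).2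
    rw [← hFj]
    simp only [hF, Finset.mem_filter, Finset.mem_univ, true_and]
    exact hji
  · rw [Finset.sum_fiberwise_of_maps_to hmaps, ← hcm,
      Finset.centerMass_eq_of_sum_1 _ _ hw₁]
    show (∑ j ∈ t, (r * wt j) • z j) = r • ∑ j ∈ t, wt j • z j
    rw [Finset.smul_sum]
    exact Finset.sum_congr rfl fun j _ => (smul_smul r (wt j) (z j)).symm
  · calc (∑ I ∈ G, ‖∑ j ∈ t.filter fun j => F j = I, (r * wt j) • z j‖)
        ≤ ∑ I ∈ G, ∑ j ∈ t.filter fun j => F j = I, ‖(r * wt j) • z j‖ :=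
          Finset.sum_le_sum fun I _ => norm_sum_le _ _
      _ = ∑ j ∈ t, ‖(r * wt j) • z j‖ := Finset.sum_fiberwise_of_maps_to hmaps _
      _ ≤ ∑ j ∈ t, r * wt j := by
          refine Finset.sum_le_sum fun j hj => ?_
          have h1 : 0 ≤ r * wt j := mul_nonneg hr (hw₀ j hj)
          rw [norm_smul, Real.norm_eq_abs, abs_of_nonneg h1]
          exact mul_le_of_le_one_right h1 (hzS j hj).2
      _ = r := by rw [← Finset.mul_sum, hw₁, mul_one]

end Aux

/-- The canonical coordinatewise decomposition of `w`. -/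
private noncomputable def vcan {d : ℕ} (w : EuclideanSpace ℝ (Fin d))
    (J : Finset (Fin d)) : EuclideanSpace ℝ (Fin d) :=
  ∑ i : Fin d, if J = {i} then EuclideanSpace.single i (w i) else 0

section Aux2

variable {d k : ℕ}

private lemma vcan_supp (w : EuclideanSpace ℝ (Fin d)) (J : Finset (Fin d)) (i : Fin d)
    (hi : vcan w J i ≠ 0) : i ∈ J := by
  classical
  have hi' : (∑ i' : Fin d, if J = {i'} then EuclideanSpace.single i' (w i') else 0) i ≠ 0 := hi
  rw [WithLp.ofLp_sum, Finset.sum_apply] at hi'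
  obtain ⟨i', _, hne⟩ := Finset.exists_ne_zero_of_sum_ne_zero hi'
  by_cases hJ : J = {i'}
  · rw [if_pos hJ] at hne
    have hii : i = i' := by
      by_contra hii
      rw [EuclideanSpace.single_apply, if_neg hii] at hne
      exact hne rfl
    rw [hJ, hii]
    exact Finset.mem_singleton_self i'
  · rw [if_neg hJ] at hne
    exact absurd rfl hne

private lemma vcan_zero (hk1 : 1 ≤ k) (w : EuclideanSpace ℝ (Fin d)) (J : Finset (Fin d))
    (hJ : ¬ J.card ≤ k) : vcan w J = 0 := by
  classical
  refine Finset.sum_eq_zero fun i _ => ?_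
  rw [if_neg]
  intro h
  rw [h, Finset.card_singleton] at hJ
  exact hJ hk1

private lemma vcan_sum (hk1 : 1 ≤ k) (w : EuclideanSpace ℝ (Fin d)) :
    (∑ I ∈ Finset.univ.filter fun I : Finset (Fin d) => I.card ≤ k, vcan w I) = w := by
  classical
  set G : Finset (Finset (Fin d)) := Finset.univ.filter fun I : Finset (Fin d) => I.card ≤ k
    with hG
  have h1 : (∑ I ∈ G, vcan w I)
      = ∑ i : Fin d, ∑ J ∈ G, if J = {i} then EuclideanSpace.single i (w i) else 0 := by
    simp only [vcan]
    exact Finset.sum_comm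
  rw [h1]
  have h2 : ∀ i : Fin d, (∑ J ∈ G, if J = {i} then EuclideanSpace.single i (w i) else 0)
      = EuclideanSpace.single i (w i) := by
    intro i
    rw [Finset.sum_ite_eq' G ({i} : Finset (Fin d)) (fun _ => EuclideanSpace.single i (w i)),
      if_pos]
    simp only [hG, Finset.mem_filter, Finset.mem_univ, true_and, Finset.card_singleton]
    exact hk1
  rw [Finset.sum_congr rfl fun i _ => h2 i]
  ext j
  rw [WithLp.ofLp_sum, Finset.sum_apply]
  simp only [EuclideanSpace.single_apply]
  rw [Finset.sum_ite_eq Finset.univ j w]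
  simp

/-- Existence of a minimizing decomposition. -/
private lemma exists_min_decomp (hk1 : 1 ≤ k) (w : EuclideanSpace ℝ (Fin d)) :
    ∃ v : Finset (Fin d) → EuclideanSpace ℝ (Fin d),
      (∀ I : Finset (Fin d), I.card ≤ k → ∀ i, v I i ≠ 0 → i ∈ I) ∧
      (∑ I ∈ Finset.univ.filter fun I : Finset (Fin d) => I.card ≤ k, v I) = w ∧
      ∀ u : Finset (Fin d) → EuclideanSpace ℝ (Fin d),
        (∀ I : Finset (Fin d), I.card ≤ k → ∀ i, u I i ≠ 0 → i ∈ I) →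
        (∑ I ∈ Finset.univ.filter fun I : Finset (Fin d) => I.card ≤ k, u I) = w →
        (∑ I ∈ Finset.univ.filter fun I : Finset (Fin d) => I.card ≤ k, ‖v I‖) ≤
          ∑ I ∈ Finset.univ.filter fun I : Finset (Fin d) => I.card ≤ k, ‖u I‖ := by
  classical
  set G : Finset (Finset (Fin d)) := Finset.univ.filter fun I : Finset (Fin d) => I.card ≤ k
    with hG
  set x₀ : ℝ := ∑ I ∈ G, ‖vcan w I‖ with hx₀
  have hx₀0 : 0 ≤ x₀ := Finset.sum_nonneg fun I _ => norm_nonneg _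
  -- the compact constraint set
  set K : Set (Finset (Fin d) → EuclideanSpace ℝ (Fin d)) :=
    ({v | ∀ I : Finset (Fin d), I.card ≤ k → ∀ i, i ∉ I → v I i = 0} ∩
      {v | ∀ J : Finset (Fin d), ¬ J.card ≤ k → v J = 0}) ∩
    ({v | (∑ I ∈ G, v I) = w} ∩ {v | (∑ I ∈ G, ‖v I‖) ≤ x₀}) with hK
  have hKclosed : IsClosed K := by
    refine IsClosed.inter (IsClosed.inter ?_ ?_) (IsClosed.inter ?_ ?_)
    · have : {v : Finset (Fin d) → EuclideanSpace ℝ (Fin d) |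
          ∀ I : Finset (Fin d), I.card ≤ k → ∀ i, i ∉ I → v I i = 0}
          = ⋂ (I : Finset (Fin d)) (i : Fin d) (_ : I.card ≤ k) (_ : i ∉ I),
            {v : Finset (Fin d) → EuclideanSpace ℝ (Fin d) | v I i = 0} := by
        ext v
        simp only [Set.mem_iInter, Set.mem_setOf_eq]
        tauto
      rw [this]
      exact isClosed_iInter fun I => isClosed_iInter fun i => isClosed_iInter fun _ =>
        isClosed_iInter fun _ =>
          isClosed_eq ((EuclideanSpace.proj i).continuous.comp (continuous_apply I))
            continuous_const
    · have : {v : Finset (Fin d) → EuclideanSpace ℝ (Fin d) |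
          ∀ J : Finset (Fin d), ¬ J.card ≤ k → v J = 0}
          = ⋂ (J : Finset (Fin d)) (_ : ¬ J.card ≤ k),
            {v : Finset (Fin d) → EuclideanSpace ℝ (Fin d) | v J = 0} := by
        ext v
        simp only [Set.mem_iInter, Set.mem_setOf_eq]
      rw [this]
      exact isClosed_iInter fun J => isClosed_iInter fun _ =>
        isClosed_eq (continuous_apply J) continuous_const
    · exact isClosed_eq (continuous_finset_sum _ fun I _ => continuous_apply I) continuous_const
    · exact isClosed_le (continuous_finset_sum _ fun I _ => (continuous_apply I).norm)
        continuous_const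
  have hKsub : K ⊆ Metric.closedBall 0 x₀ := by
    rintro v ⟨⟨_, hv2⟩, _, hv4⟩
    rw [Metric.mem_closedBall, dist_zero_right]
    rw [pi_norm_le_iff_of_nonneg hx₀0]
    intro J
    by_cases hJ : J.card ≤ k
    · refine le_trans ?_ hv4
      refine Finset.single_le_sum (fun I _ => norm_nonneg (v I)) ?_
      simp only [hG, Finset.mem_filter, Finset.mem_univ, true_and]
      exact hJ
    · rw [hv2 J hJ, norm_zero]
      exact hx₀0
  have hKcompact : IsCompact K :=
    IsCompact.of_isClosed_subset (isCompact_closedBall 0 x₀) hKclosed hKsub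
  have hvcanK : vcan w ∈ K := by
    refine ⟨⟨?_, fun J hJ => vcan_zero hk1 w J hJ⟩, vcan_sum hk1 w, le_refl x₀⟩
    intro I _ i hi
    by_contra h
    exact hi (vcan_supp w I i h)
  have hcont : Continuous fun v : Finset (Fin d) → EuclideanSpace ℝ (Fin d) =>
      ∑ I ∈ G, ‖v I‖ := continuous_finset_sum _ fun I _ => (continuous_apply I).norm
  obtain ⟨v, hvK, hvmin⟩ := hKcompact.exists_isMinOn ⟨vcan w, hvcanK⟩ hcont.continuousOn
  obtain ⟨⟨hv1, hv2⟩, hv3, hv4⟩ := hvK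
  refine ⟨v, ?_, hv3, ?_⟩
  · intro I hI i hi
    by_contra h
    exact hi (hv1 I hI i h)
  · intro u hu1 hu2
    set u' : Finset (Fin d) → EuclideanSpace ℝ (Fin d) :=
      fun J => if J.card ≤ k then u J else 0 with hu'
    have hgu' : (∑ I ∈ G, ‖u' I‖) = ∑ I ∈ G, ‖u I‖ := by
      refine Finset.sum_congr rfl fun I hI => ?_
      have : I.card ≤ k := by
        simpa only [hG, Finset.mem_filter, Finset.mem_univ, true_and] using hI
      rw [hu']
      simp only [if_pos this]
    by_cases hcase : (∑ I ∈ G, ‖u I‖) ≤ x₀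
    · have hu'K : u' ∈ K := by
        refine ⟨⟨?_, ?_⟩, ?_, ?_⟩
        · intro I hI i hiI
          rw [hu']
          simp only [if_pos hI]
          by_contra h
          exact hiI (hu1 I hI i h)
        · intro J hJ
          rw [hu']
          simp only [if_neg hJ]
        · rw [← hu2]
          refine Finset.sum_congr rfl fun I hI => ?_
          have : I.card ≤ k := by
            simpa only [hG, Finset.mem_filter, Finset.mem_univ, true_and] using hI
          rw [hu']
          simp only [if_pos this]
        · show (∑ I ∈ G, ‖u' I‖) ≤ x₀
          rw [hgu']
          exact hcase
      have := isMinOn_iff.mp hvmin u' hu'K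
      rw [hgu'] at this
      exact this
    · push_neg at hcase
      have h1 : (∑ I ∈ G, ‖v I‖) ≤ x₀ := isMinOn_iff.mp hvmin (vcan w) hvcanK
      exact h1.trans hcase.le

end Aux2

/-- the k-support norm is the minimum of `∑_{I ∈ G_k} ‖v_I‖₂` over
decompositions `w = ∑_{I ∈ G_k} v_I` with `supp(v_I) ⊆ I`, where `G_k` is the
collection of all subsets of `{1,…,d}` of cardinality at most `k`. -/
theorem statement10 (d k : ℕ) (hk1 : 1 ≤ k) (hkd : k ≤ d) (w : EuclideanSpace ℝ (Fin d)) :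
    IsLeast {x : ℝ | ∃ v : Finset (Fin d) → EuclideanSpace ℝ (Fin d),
        (∀ I : Finset (Fin d), I.card ≤ k → ∀ i, v I i ≠ 0 → i ∈ I) ∧
        (∑ I ∈ Finset.univ.filter fun I : Finset (Fin d) => I.card ≤ k, v I) = w ∧
        x = ∑ I ∈ Finset.univ.filter fun I : Finset (Fin d) => I.card ≤ k, ‖v I‖}
      (kSupNorm d k w) := by
  classical
  constructor
  · obtain ⟨v, hv1, hv2, hvmin⟩ := exists_min_decomp hk1 w
    have hub : gauge (kSupBall d k) w ≤
        ∑ I ∈ Finset.univ.filter fun I : Finset (Fin d) => I.card ≤ k, ‖v I‖ :=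
      gauge_le_decomp w v hv1 hv2
    have hlb : (∑ I ∈ Finset.univ.filter fun I : Finset (Fin d) => I.card ≤ k, ‖v I‖) ≤
        gauge (kSupBall d k) w := by
      rw [gauge_def]
      refine le_csInf ?_ ?_
      · -- nonemptiness of the gauge defining set
        have hx0 : 0 ≤ ∑ I ∈ Finset.univ.filter fun I : Finset (Fin d) => I.card ≤ k, ‖v I‖ :=
          Finset.sum_nonneg fun I _ => norm_nonneg _
        rcases hx0.eq_or_lt with h | h
        · -- then w = 0
          have hw : w = 0 := by
            rw [← hv2]
            refine Finset.sum_eq_zero fun I hI => ?_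
            have := (Finset.sum_eq_zero_iff_of_nonneg
              fun I _ => norm_nonneg (v I)).mp h.symm I hI
            exact norm_eq_zero.mp this
          have h0B : (0 : EuclideanSpace ℝ (Fin d)) ∈ kSupBall d k := by
            apply subset_convexHull
            constructor
            · have hemp : (Finset.univ.filter
                  fun i : Fin d => (0 : EuclideanSpace ℝ (Fin d)) i ≠ 0) = ∅ := by
                refine Finset.filter_false_of_mem fun i _ => ?_
                show ¬ (0 : ℝ) ≠ 0
                simp
              rw [hemp, Finset.card_empty]
              exact Nat.zero_le k
            · show ‖(0 : EuclideanSpace ℝ (Fin d))‖ ≤ 1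
              rw [norm_zero]
              exact zero_le_one
          refine ⟨1, Set.mem_Ioi.mpr one_pos, ?_⟩
          rw [hw]
          exact ⟨0, h0B, smul_zero 1⟩
        · exact ⟨_, Set.mem_Ioi.mpr h, decomp_mem_smul w v hv1 hv2 h⟩
      · rintro r ⟨hr, hrw⟩
        obtain ⟨u, hu1, hu2, hu3⟩ := exists_decomp_le w r (le_of_lt hr) hrw
        exact (hvmin u hu1 hu2).trans hu3
    refine ⟨v, hv1, hv2, le_antisymm hub hlb⟩
  · rintro x ⟨v, h1, h2, rfl⟩
    exact gauge_le_decomp w v h1 h2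
end

section
/- For every integer 1 ≤ k ≤ d, the convex hull of the set {w ∈ ℝ^d : ‖w‖₀ ≤ k, ‖w‖_∞ ≤ 1} equals {w ∈ ℝ^d : ‖w‖₁ ≤ k, ‖w‖_∞ ≤ 1}. -/
private lemma tconv (d k : ℕ) :
    Convex ℝ {w : Fin d → ℝ | (∑ i, |w i|) ≤ k ∧ ∀ i, |w i| ≤ 1} := by
  intro x hx y hy a b ha hb hab
  constructor
  · calc ∑ i, |(a • x + b • y) i| ≤ ∑ i, (a * |x i| + b * |y i|) := by
          apply Finset.sum_le_sum
          intro i _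
          simp only [Pi.add_apply, Pi.smul_apply, smul_eq_mul]
          calc |a * x i + b * y i| ≤ |a * x i| + |b * y i| := abs_add_le _ _
            _ = a * |x i| + b * |y i| := by
                rw [abs_mul, abs_mul, abs_of_nonneg ha, abs_of_nonneg hb]
      _ = a * ∑ i, |x i| + b * ∑ i, |y i| := by
          rw [Finset.sum_add_distrib, Finset.mul_sum, Finset.mul_sum]
      _ ≤ a * k + b * k := by
          gcongr
          exacts [hx.1, hy.1]
      _ = k := by rw [← add_mul, hab, one_mul]
  · intro i
    simp only [Pi.add_apply, Pi.smul_apply, smul_eq_mul]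
    calc |a * x i + b * y i| ≤ a * |x i| + b * |y i| := by
          refine (abs_add_le _ _).trans ?_
          rw [abs_mul, abs_mul, abs_of_nonneg ha, abs_of_nonneg hb]
      _ ≤ a * 1 + b * 1 := by gcongr; exacts [hx.2 i, hy.2 i]
      _ = 1 := by rw [mul_one, mul_one, hab]

private lemma sgn_spec (x : ℝ) (hx : x ≠ 0) :
    ∃ s : ℝ, |s| = 1 ∧ x = s * |x| := by
  rcases hx.lt_or_gt with h | h
  · exact ⟨-1, by norm_num, by rw [abs_of_neg h]; ring⟩
  · exact ⟨1, by norm_num, by rw [abs_of_pos h]; ring⟩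

private lemma sum_two (d : ℕ) (w u : Fin d → ℝ) (i j : Fin d) (hij : i ≠ j)
    (hoff : ∀ x, x ≠ i → x ≠ j → u x = w x) :
    ∑ x, |u x| = (∑ x, |w x|) + ((|u i| - |w i|) + (|u j| - |w j|)) := by
  have h1 : ∑ x ∈ ({i, j} : Finset (Fin d)), (|u x| - |w x|)
      = ∑ x, (|u x| - |w x|) := by
    apply Finset.sum_subset (Finset.subset_univ _)
    intro x _ hx
    simp only [Finset.mem_insert, Finset.mem_singleton, not_or] at hx
    rw [hoff x hx.1 hx.2, sub_self]
  have h2 : ∑ x ∈ ({i, j} : Finset (Fin d)), (|u x| - |w x|)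
      = (|u i| - |w i|) + (|u j| - |w j|) := Finset.sum_pair hij
  have h3 : ∑ x, (|u x| - |w x|) = (∑ x, |u x|) - ∑ x, |w x| :=
    Finset.sum_sub_distrib _ _
  rw [h3, h2] at h1
  linarith

/-- one step of the pair-move: the perturbed vector lands in the hull by IH -/
private lemma step_mem (d k n : ℕ)
    (ih : ∀ w : Fin d → ℝ, (∑ x, |w x|) ≤ k → (∀ x, |w x| ≤ 1) →
      (Finset.univ.filter fun x => w x ≠ 0 ∧ |w x| ≠ 1).card ≤ n →
      w ∈ convexHull ℝ {w : Fin d → ℝ |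
        (Finset.univ.filter fun x => w x ≠ 0).card ≤ k ∧ ∀ x, |w x| ≤ 1})
    (w u : Fin d → ℝ) (i j : Fin d) (hij : i ≠ j)
    (hw1 : (∑ x, |w x|) ≤ k) (hw2 : ∀ x, |w x| ≤ 1)
    (hFw : (Finset.univ.filter fun x => w x ≠ 0 ∧ |w x| ≠ 1).card ≤ n + 1)
    (hiF : w i ≠ 0 ∧ |w i| ≠ 1) (hjF : w j ≠ 0 ∧ |w j| ≠ 1)
    (hoff : ∀ x, x ≠ i → x ≠ j → u x = w x)
    (habs : |u i| + |u j| = |w i| + |w j|)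
    (hui : |u i| ≤ 1) (huj : |u j| ≤ 1)
    (hdrop : (u i = 0 ∨ |u i| = 1) ∨ (u j = 0 ∨ |u j| = 1)) :
    u ∈ convexHull ℝ {w : Fin d → ℝ |
        (Finset.univ.filter fun x => w x ≠ 0).card ≤ k ∧ ∀ x, |w x| ≤ 1} := by
  have hsum : ∑ x, |u x| ≤ k := by
    rw [sum_two d w u i j hij hoff]; linarith
  have hsup : ∀ x, |u x| ≤ 1 := by
    intro x
    by_cases hxi : x = i
    · subst hxi; exact hui
    by_cases hxj : x = j
    · subst hxj; exact huj
    rw [hoff x hxi hxj]; exact hw2 x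
  have hFsub : (Finset.univ.filter fun x => u x ≠ 0 ∧ |u x| ≠ 1)
      ⊆ (Finset.univ.filter fun x => w x ≠ 0 ∧ |w x| ≠ 1) := by
    intro x hx
    simp only [Finset.mem_filter, Finset.mem_univ, true_and] at hx ⊢
    by_cases hxi : x = i
    · subst hxi; exact hiF
    by_cases hxj : x = j
    · subst hxj; exact hjF
    rwa [hoff x hxi hxj] at hx
  have hFss : (Finset.univ.filter fun x => u x ≠ 0 ∧ |u x| ≠ 1)
      ⊂ (Finset.univ.filter fun x => w x ≠ 0 ∧ |w x| ≠ 1) := by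
    refine ⟨hFsub, ?_⟩
    intro hsub
    rcases hdrop with h | h
    · have := hsub (Finset.mem_filter.2 ⟨Finset.mem_univ i, hiF⟩)
      simp only [Finset.mem_filter, Finset.mem_univ, true_and] at this
      rcases h with h | h
      · exact this.1 h
      · exact this.2 h
    · have := hsub (Finset.mem_filter.2 ⟨Finset.mem_univ j, hjF⟩)
      simp only [Finset.mem_filter, Finset.mem_univ, true_and] at this
      rcases h with h | h
      · exact this.1 h
      · exact this.2 h
  have hcard := Finset.card_lt_card hFss
  exact ih u hsum hsup (by omega)

private lemma tmain (d k : ℕ) (hk1 : 1 ≤ k) :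
    ∀ (n : ℕ) (w : Fin d → ℝ), (∑ x, |w x|) ≤ k → (∀ x, |w x| ≤ 1) →
      (Finset.univ.filter fun x => w x ≠ 0 ∧ |w x| ≠ 1).card ≤ n →
      w ∈ convexHull ℝ {w : Fin d → ℝ |
        (Finset.univ.filter fun x => w x ≠ 0).card ≤ k ∧ ∀ x, |w x| ≤ 1} := by
  intro n
  induction n with
  | zero =>
    intro w hw1 hw2 hF
    -- every coordinate is 0 or ±1
    have hF0 : ∀ x, w x = 0 ∨ |w x| = 1 := by
      intro x
      by_contra hx
      push_neg at hx
      have : x ∈ Finset.univ.filter fun x => w x ≠ 0 ∧ |w x| ≠ 1 :=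
        Finset.mem_filter.2 ⟨Finset.mem_univ x, hx⟩
      have := Finset.card_pos.2 ⟨x, this⟩
      omega
    apply subset_convexHull
    refine ⟨?_, hw2⟩
    have hsum : ∑ x, |w x|
        = ((Finset.univ.filter fun x => w x ≠ 0).card : ℝ) := by
      rw [Finset.card_eq_sum_ones, Nat.cast_sum]
      rw [← Finset.sum_filter_ne_zero (s := Finset.univ) (f := fun x => |w x|)]
      have hfilter : (Finset.univ.filter fun x => |w x| ≠ 0)
          = Finset.univ.filter fun x => w x ≠ 0 := by
        apply Finset.filter_congr
        intro x _
        simp [abs_ne_zero]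
      rw [hfilter]
      apply Finset.sum_congr rfl
      intro x hx
      simp only [Finset.mem_filter] at hx
      rcases hF0 x with h | h
      · exact absurd h hx.2
      · simp [h]
    rw [hsum] at hw1
    exact_mod_cast hw1
  | succ n ih =>
    intro w hw1 hw2 hF
    rcases Nat.lt_or_ge (Finset.univ.filter fun x => w x ≠ 0 ∧ |w x| ≠ 1).card (n+1)
      with hlt | hge
    · exact ih w hw1 hw2 (by omega)
    -- there is a fractional coordinate i
    have hne : (Finset.univ.filter fun x => w x ≠ 0 ∧ |w x| ≠ 1).Nonempty :=
      Finset.card_pos.1 (by omega)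
    obtain ⟨i, hi⟩ := hne
    have hiF : w i ≠ 0 ∧ |w i| ≠ 1 :=
      (Finset.mem_filter.1 hi).2
    have hi0 : 0 < |w i| := abs_pos.2 hiF.1
    have hi1 : |w i| < 1 := lt_of_le_of_ne (hw2 i) hiF.2
    obtain ⟨s, hs1, hsi⟩ := sgn_spec (w i) hiF.1
    by_cases hex : ∃ j, (w j ≠ 0 ∧ |w j| ≠ 1) ∧ j ≠ i
    · -- pair move
      obtain ⟨j, hjF, hji⟩ := hex
      have hj0 : 0 < |w j| := abs_pos.2 hjF.1
      have hj1 : |w j| < 1 := lt_of_le_of_ne (hw2 j) hjF.2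
      obtain ⟨t, ht1, htj⟩ := sgn_spec (w j) hjF.1
      set β := min (1 - |w i|) |w j| with hβdef
      set α := min |w i| (1 - |w j|) with hαdef
      have hβ : 0 < β := lt_min (by linarith) hj0
      have hα : 0 < α := lt_min hi0 (by linarith)
      have hβi : β ≤ 1 - |w i| := min_le_left _ _
      have hβj : β ≤ |w j| := min_le_right _ _
      have hαi : α ≤ |w i| := min_le_left _ _
      have hαj : α ≤ 1 - |w j| := min_le_right _ _
      set u : Fin d → ℝ := fun x =>
        if x = i then s * (|w i| + β) else if x = j then t * (|w j| - β) else w x with hudef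
      set v : Fin d → ℝ := fun x =>
        if x = i then s * (|w i| - α) else if x = j then t * (|w j| + α) else w x with hvdef
      have hji' : i ≠ j := fun h => hji h.symm
      have hui : u i = s * (|w i| + β) := by simp [hudef]
      have huj : u j = t * (|w j| - β) := by simp [hudef, hji]
      have hvi : v i = s * (|w i| - α) := by simp [hvdef]
      have hvj : v j = t * (|w j| + α) := by simp [hvdef, hji]
      have habsui : |u i| = |w i| + β := by
        rw [hui, abs_mul, hs1, one_mul, abs_of_nonneg (by linarith)]
      have habsuj : |u j| = |w j| - β := by
        rw [huj, abs_mul, ht1, one_mul, abs_of_nonneg (by linarith)]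
      have habsvi : |v i| = |w i| - α := by
        rw [hvi, abs_mul, hs1, one_mul, abs_of_nonneg (by linarith)]
      have habsvj : |v j| = |w j| + α := by
        rw [hvj, abs_mul, ht1, one_mul, abs_of_nonneg (by linarith)]
      have hu : u ∈ convexHull ℝ {w : Fin d → ℝ |
          (Finset.univ.filter fun x => w x ≠ 0).card ≤ k ∧ ∀ x, |w x| ≤ 1} := by
        apply step_mem d k n ih w u i j hji' hw1 hw2 hF hiF hjF
        · intro x hxi hxj; simp [hudef, hxi, hxj]
        · rw [habsui, habsuj]; ring
        · rw [habsui]; linarith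
        · rw [habsuj]; linarith
        · rcases le_total (1 - |w i|) (|w j|) with h | h
          · left; right
            rw [habsui, hβdef, min_eq_left h]; ring
          · right; left
            rw [huj, hβdef, min_eq_right h, sub_self, mul_zero]
      have hv : v ∈ convexHull ℝ {w : Fin d → ℝ |
          (Finset.univ.filter fun x => w x ≠ 0).card ≤ k ∧ ∀ x, |w x| ≤ 1} := by
        apply step_mem d k n ih w v i j hji' hw1 hw2 hF hiF hjF
        · intro x hxi hxj; simp [hvdef, hxi, hxj]
        · rw [habsvi, habsvj]; ring
        · rw [habsvi]; linarith
        · rw [habsvj]; linarith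
        · rcases le_total (|w i|) (1 - |w j|) with h | h
          · left; left
            rw [hvi, hαdef, min_eq_left h, sub_self, mul_zero]
          · right; right
            rw [habsvj, hαdef, min_eq_right h]; ring
      -- w is a convex combination of u and v
      have hαβ : 0 < α + β := by linarith
      have hcomb : (α / (α + β)) • u + (β / (α + β)) • v = w := by
        funext x
        simp only [Pi.add_apply, Pi.smul_apply, smul_eq_mul]
        by_cases hxi : x = i
        · subst hxi
          rw [hui, hvi]
          conv_rhs => rw [hsi]
          field_simp
          ring
        by_cases hxj : x = j
        · subst hxj
          rw [huj, hvj]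
          conv_rhs => rw [htj]
          field_simp
          ring
        · simp only [hudef, hvdef, if_neg hxi, if_neg hxj]
          field_simp
      rw [← hcomb]
      exact (convex_convexHull ℝ _) hu hv
        (by positivity) (by positivity)
        (by field_simp)
    · -- i is the only fractional coordinate
      push_neg at hex
      have honly : ∀ x, x ≠ i → w x = 0 ∨ |w x| = 1 := by
        intro x hx
        by_contra hc
        push_neg at hc
        exact hx (hex x hc)
      set u : Fin d → ℝ := fun x => if x = i then s else w x with hudef
      set v : Fin d → ℝ := fun x => if x = i then 0 else w x with hvdef
      -- count of full coordinates off i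
      have hsplit : ∑ x, |w x| = |w i| + ∑ x ∈ Finset.univ.erase i, |w x| :=
        (Finset.add_sum_erase _ _ (Finset.mem_univ i)).symm
      set A := (Finset.univ.erase i).filter (fun x => w x ≠ 0) with hAdef
      have hAsum : ∑ x ∈ Finset.univ.erase i, |w x| = (A.card : ℝ) := by
        rw [Finset.card_eq_sum_ones, Nat.cast_sum]
        rw [hAdef]
        rw [← Finset.sum_filter_ne_zero (s := Finset.univ.erase i)
          (f := fun x => |w x|)]
        have hfilter : ((Finset.univ.erase i).filter fun x => |w x| ≠ 0)
            = (Finset.univ.erase i).filter fun x => w x ≠ 0 := by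
          apply Finset.filter_congr
          intro x _
          simp [abs_ne_zero]
        rw [hfilter]
        apply Finset.sum_congr rfl
        intro x hx
        simp only [Finset.mem_filter, Finset.mem_erase] at hx
        rcases honly x hx.1.1 with h | h
        · exact absurd h hx.2
        · simp [h]
      have hAk : (A.card : ℝ) + |w i| ≤ k := by
        rw [← hAsum]; linarith [hsplit ▸ hw1]
      have hAlt : A.card < k := by
        have : (A.card : ℝ) < k := by linarith
        exact_mod_cast this
      -- u and v have no fractional coordinates
      have hFu : (Finset.univ.filter fun x => u x ≠ 0 ∧ |u x| ≠ 1) = ∅ := by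
        apply Finset.filter_false_of_mem
        intro x _
        by_cases hxi : x = i
        · subst hxi
          simp only [hudef, if_pos rfl]
          intro h
          exact absurd hs1 h.2
        · simp only [hudef, if_neg hxi]
          intro h
          rcases honly x hxi with h0 | h1
          · exact h.1 h0
          · exact h.2 h1
      have hFv : (Finset.univ.filter fun x => v x ≠ 0 ∧ |v x| ≠ 1) = ∅ := by
        apply Finset.filter_false_of_mem
        intro x _
        by_cases hxi : x = i
        · subst hxi
          simp only [hvdef, if_pos rfl]
          intro h
          exact h.1 rfl
        · simp only [hvdef, if_neg hxi]
          intro h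
          rcases honly x hxi with h0 | h1
          · exact h.1 h0
          · exact h.2 h1
      have husum : ∑ x, |u x| ≤ k := by
        have h1 : ∑ x, |u x| = |u i| + ∑ x ∈ Finset.univ.erase i, |u x| :=
          (Finset.add_sum_erase _ _ (Finset.mem_univ i)).symm
        have h2 : ∑ x ∈ Finset.univ.erase i, |u x|
            = ∑ x ∈ Finset.univ.erase i, |w x| := by
          apply Finset.sum_congr rfl
          intro x hx
          simp only [Finset.mem_erase] at hx
          simp [hudef, hx.1]
        have h3 : |u i| = 1 := by simp [hudef, hs1]
        rw [h1, h2, h3, hAsum]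
        have : A.card + 1 ≤ k := by omega
        have : (A.card : ℝ) + 1 ≤ k := by exact_mod_cast this
        linarith
      have hvsum : ∑ x, |v x| ≤ k := by
        have h1 : ∑ x, |v x| = |v i| + ∑ x ∈ Finset.univ.erase i, |v x| :=
          (Finset.add_sum_erase _ _ (Finset.mem_univ i)).symm
        have h2 : ∑ x ∈ Finset.univ.erase i, |v x|
            = ∑ x ∈ Finset.univ.erase i, |w x| := by
          apply Finset.sum_congr rfl
          intro x hx
          simp only [Finset.mem_erase] at hx
          simp [hvdef, hx.1]
        have h3 : |v i| = 0 := by simp [hvdef]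
        rw [h1, h2, h3, hAsum]
        have : (A.card : ℝ) ≤ k := by exact_mod_cast hAlt.le
        linarith
      have husup : ∀ x, |u x| ≤ 1 := by
        intro x
        by_cases hxi : x = i
        · subst hxi; simp [hudef, hs1]
        · simp only [hudef, if_neg hxi]; exact hw2 x
      have hvsup : ∀ x, |v x| ≤ 1 := by
        intro x
        by_cases hxi : x = i
        · subst hxi; simp [hvdef]
        · simp only [hvdef, if_neg hxi]; exact hw2 x
      have hu := ih u husum husup (by rw [hFu]; simp)
      have hv := ih v hvsum hvsup (by rw [hFv]; simp)
      have hcomb : |w i| • u + (1 - |w i|) • v = w := by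
        funext x
        simp only [Pi.add_apply, Pi.smul_apply, smul_eq_mul]
        by_cases hxi : x = i
        · subst hxi
          simp only [hudef, hvdef, if_pos rfl]
          conv_rhs => rw [hsi]
          ring
        · simp only [hudef, hvdef, if_neg hxi]
          ring
      rw [← hcomb]
      exact (convex_convexHull ℝ _) hu hv (by linarith) (by linarith) (by ring)

/-- the convex hull of `{w : ‖w‖₀ ≤ k, ‖w‖_∞ ≤ 1}` equals
`{w : ‖w‖₁ ≤ k, ‖w‖_∞ ≤ 1}`. -/
theorem statement11 (d k : ℕ) (hk1 : 1 ≤ k) (hkd : k ≤ d) :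
    convexHull ℝ {w : Fin d → ℝ |
        (Finset.univ.filter fun i => w i ≠ 0).card ≤ k ∧ ∀ i, |w i| ≤ 1}
      = {w : Fin d → ℝ | (∑ i, |w i|) ≤ k ∧ ∀ i, |w i| ≤ 1} := by
  apply Set.Subset.antisymm
  · apply convexHull_min _ (tconv d k)
    rintro w ⟨hcard, hsup⟩
    refine ⟨?_, hsup⟩
    calc ∑ i, |w i| = ∑ i ∈ Finset.univ.filter (fun i => w i ≠ 0), |w i| := by
          symm
          apply Finset.sum_subset (Finset.filter_subset _ _)
          intro x _ hx
          simp only [Finset.mem_filter, Finset.mem_univ, true_and, not_not] at hx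
          simp [hx]
      _ ≤ ∑ _i ∈ Finset.univ.filter (fun i => w i ≠ 0), (1 : ℝ) :=
          Finset.sum_le_sum fun i _ => hsup i
      _ = ((Finset.univ.filter fun i => w i ≠ 0).card : ℝ) := by simp
      _ ≤ k := by exact_mod_cast hcard
  · rintro w ⟨hw1, hw2⟩
    exact tmain d k hk1 (Finset.univ.filter fun x => w x ≠ 0 ∧ |w x| ≠ 1).card
      w hw1 hw2 le_rfl
end
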